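/- arXiv:2101.04715 — 7 statements merged into one kernel-verified Lean document; each statement's English description precedes it below -/
import Mathlib

section
/- Let $\operatorname{CP}(\lambda, \zeta)$ denote a compound Poisson distribution with arrival rate $\lambda > 0$ and increment distribution $\zeta$ supported on positive integers. Then for rates $\lambda_1, \lambda_2 > 0$ and increment distributions $\zeta_1, \zeta_2$, $d_{TV}(\operatorname{CP}(\lambda_1,\zeta_1), \operatorname{CP}(\lambda_2,\zeta_2)) \leq \min\{\lambda_1,\lambda_2\}\, d_{TV}(\zeta_1,\zeta_2) + d_{TV}(\operatorname{Pois}(\lambda_1), \operatorname{Pois}(\lambda_2))$. -/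
open MeasureTheory ProbabilityTheory
open scoped NNReal

/-- Total variation distance between two probability mass functions on `ℕ`,
defined as the supremum of `|p(A) - q(A)|` over all sets `A ⊆ ℕ`. -/
noncomputable def pmfTVDist (p q : PMF ℕ) : ℝ :=
  ⨆ A : Set ℕ, |(p.toMeasure A).toReal - (q.toMeasure A).toReal|

/-- The `n`-fold convolution of a distribution `ζ` on `ℕ`, i.e. the distribution of the
sum of `n` i.i.d. draws from `ζ`. -/
noncomputable def iterConv (ζ : PMF ℕ) : ℕ → PMF ℕ
  | 0 => PMF.pure 0
  | n + 1 => (iterConv ζ n).bind fun a => ζ.map fun b => a + b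

/-- The compound Poisson distribution `CP(λ, ζ)`: the distribution of `∑_{i=1}^N Z_i` where
`N ~ Pois(λ)` and the `Z_i` are i.i.d. with distribution `ζ`, independent of `N`. -/
noncomputable def compoundPoisson (lam : ℝ≥0) (ζ : PMF ℕ) : PMF ℕ :=
  (poissonPMF lam).bind (iterConv ζ)

namespace StmtAux

open scoped ENNReal

/-- Unnormalized "one-sided" total variation in `ℝ≥0∞`. -/
noncomputable def Td (p q : PMF ℕ) : ℝ≥0∞ := ∑' x, (p x - q x)

lemma tsum_tsub_le {f g : ℕ → ℝ≥0∞} : ∑' x, f x - ∑' x, g x ≤ ∑' x, (f x - g x) := by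
  rw [tsub_le_iff_right, ← ENNReal.tsum_add]
  exact ENNReal.tsum_le_tsum fun x => le_tsub_add

lemma Td_le_one (p q : PMF ℕ) : Td p q ≤ 1 :=
  le_of_le_of_eq (ENNReal.tsum_le_tsum fun x => tsub_le_self) p.tsum_coe

lemma Td_ne_top (p q : PMF ℕ) : Td p q ≠ ∞ :=
  ne_top_of_le_ne_top ENNReal.one_ne_top (Td_le_one p q)

lemma Td_eq (p q : PMF ℕ) : Td p q = 1 - ∑' x, p x ⊓ q x := by
  have h : ∀ x, p x - q x = p x - (p x ⊓ q x) := by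
    intro x
    rcases le_total (p x) (q x) with h | h
    · simp [inf_eq_left.mpr h, tsub_eq_zero_of_le h]
    · simp [inf_eq_right.mpr h]
  have hfin : ∑' x, (p x ⊓ q x) ≠ ∞ := by
    refine ne_top_of_le_ne_top ENNReal.one_ne_top ?_
    exact le_of_le_of_eq (ENNReal.tsum_le_tsum fun x => inf_le_left) p.tsum_coe
  calc Td p q = ∑' x, (p x - (p x ⊓ q x)) := tsum_congr h
    _ = (∑' x, p x) - ∑' x, (p x ⊓ q x) :=
        ENNReal.tsum_sub hfin (fun x => inf_le_left)
    _ = 1 - ∑' x, (p x ⊓ q x) := by rw [p.tsum_coe]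

lemma Td_comm (p q : PMF ℕ) : Td p q = Td q p := by
  rw [Td_eq, Td_eq]
  simp [inf_comm]

lemma Td_triangle (p q r : PMF ℕ) : Td p r ≤ Td p q + Td q r := by
  rw [Td, Td, Td, ← ENNReal.tsum_add]
  refine ENNReal.tsum_le_tsum fun x => ?_
  rw [tsub_le_iff_right]
  calc p x ≤ (p x - q x) + q x := le_tsub_add
    _ ≤ (p x - q x) + ((q x - r x) + r x) := by
        exact add_le_add_right le_tsub_add _
    _ = (p x - q x) + (q x - r x) + r x := by ring

lemma toMeasure_apply' (p : PMF ℕ) (A : Set ℕ) :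
    p.toMeasure A = ∑' x, A.indicator p x :=
  p.toMeasure_apply MeasurableSet.of_discrete

lemma indicator_tsum_le (p : PMF ℕ) (A : Set ℕ) :
    ∑' x, A.indicator p x ≤ 1 :=
  le_of_le_of_eq (ENNReal.tsum_le_tsum fun x => Set.indicator_le_self A p x) p.tsum_coe

lemma indicator_tsum_ne_top (p : PMF ℕ) (A : Set ℕ) :
    ∑' x, A.indicator p x ≠ ∞ :=
  ne_top_of_le_ne_top ENNReal.one_ne_top (indicator_tsum_le p A)

lemma meas_sub_le (p q : PMF ℕ) (A : Set ℕ) :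
    (p.toMeasure A).toReal - (q.toMeasure A).toReal ≤ (Td p q).toReal := by
  rw [toMeasure_apply', toMeasure_apply']
  have key : ∑' x, A.indicator p x ≤ (∑' x, A.indicator q x) + Td p q := by
    rw [Td, ← ENNReal.tsum_add]
    refine ENNReal.tsum_le_tsum fun x => ?_
    by_cases hx : x ∈ A
    · simp only [Set.indicator_of_mem hx]
      exact le_add_tsub
    · simp [Set.indicator_of_notMem hx]
  rw [sub_le_iff_le_add]
  have hfin : (∑' x, A.indicator q x) + Td p q ≠ ∞ :=
    ENNReal.add_ne_top.mpr ⟨indicator_tsum_ne_top q A, Td_ne_top p q⟩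
  calc (∑' x, A.indicator p x).toReal
      ≤ ((∑' x, A.indicator q x) + Td p q).toReal :=
        ENNReal.toReal_mono hfin key
    _ = (Td p q).toReal + (∑' x, A.indicator q x).toReal := by
        rw [ENNReal.toReal_add (indicator_tsum_ne_top q A) (Td_ne_top p q)]
        ring

lemma bddAbove_tv (p q : PMF ℕ) :
    BddAbove (Set.range fun A : Set ℕ =>
      |(p.toMeasure A).toReal - (q.toMeasure A).toReal|) := by
  refine ⟨1, ?_⟩
  rintro x ⟨A, rfl⟩
  have hp : (p.toMeasure A).toReal ≤ 1 := by
    have := prob_le_one (μ := p.toMeasure) (s := A)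
    simpa using ENNReal.toReal_mono ENNReal.one_ne_top this
  have hq : (q.toMeasure A).toReal ≤ 1 := by
    have := prob_le_one (μ := q.toMeasure) (s := A)
    simpa using ENNReal.toReal_mono ENNReal.one_ne_top this
  have hp0 : 0 ≤ (p.toMeasure A).toReal := ENNReal.toReal_nonneg
  have hq0 : 0 ≤ (q.toMeasure A).toReal := ENNReal.toReal_nonneg
  rw [abs_sub_le_iff]
  constructor <;> linarith

lemma tv_eq (p q : PMF ℕ) : pmfTVDist p q = (Td p q).toReal := by
  refine le_antisymm ?_ ?_
  · refine ciSup_le fun A => ?_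
    rw [abs_sub_le_iff]
    exact ⟨meas_sub_le p q A, (Td_comm p q) ▸ meas_sub_le q p A⟩
  · set A₀ : Set ℕ := {x | q x ≤ p x}
    have hpt : ∀ x, A₀.indicator p x = (p x - q x) + A₀.indicator q x := by
      intro x
      by_cases hx : x ∈ A₀
      · simp only [Set.indicator_of_mem hx]
        rw [tsub_add_cancel_of_le hx]
      · have hlt : p x < q x := not_le.mp hx
        simp [Set.indicator_of_notMem hx, tsub_eq_zero_of_le hlt.le]
    have hsum : ∑' x, A₀.indicator p x = Td p q + ∑' x, A₀.indicator q x := by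
      rw [tsum_congr hpt, ENNReal.tsum_add]
      rfl
    have hkey : (Td p q).toReal =
        (p.toMeasure A₀).toReal - (q.toMeasure A₀).toReal := by
      rw [toMeasure_apply', toMeasure_apply', hsum,
        ENNReal.toReal_add (Td_ne_top p q) (indicator_tsum_ne_top q A₀)]
      ring
    have habs : (Td p q).toReal =
        |(p.toMeasure A₀).toReal - (q.toMeasure A₀).toReal| := by
      rw [← hkey, abs_of_nonneg ENNReal.toReal_nonneg]
    rw [habs]
    exact le_ciSup (bddAbove_tv p q) A₀

lemma pmfTVDist_comm (p q : PMF ℕ) : pmfTVDist p q = pmfTVDist q p := by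
  rw [tv_eq, tv_eq, Td_comm]

lemma Td_bind_bind (p : PMF ℕ) (κ₁ κ₂ : ℕ → PMF ℕ) :
    Td (p.bind κ₁) (p.bind κ₂) ≤ ∑' n, p n * Td (κ₁ n) (κ₂ n) := by
  have step1 : ∀ x : ℕ, (p.bind κ₁) x - (p.bind κ₂) x ≤
      ∑' n, p n * (κ₁ n x - κ₂ n x) := by
    intro x
    rw [PMF.bind_apply, PMF.bind_apply]
    refine le_trans tsum_tsub_le (ENNReal.tsum_le_tsum fun n => ?_)
    rw [ENNReal.mul_sub fun _ _ => PMF.apply_ne_top p n]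
  calc Td (p.bind κ₁) (p.bind κ₂)
      ≤ ∑' x, ∑' n, p n * (κ₁ n x - κ₂ n x) := ENNReal.tsum_le_tsum step1
    _ = ∑' n, ∑' x, p n * (κ₁ n x - κ₂ n x) := ENNReal.tsum_comm
    _ = ∑' n, p n * Td (κ₁ n) (κ₂ n) := by
        refine tsum_congr fun n => ?_
        rw [ENNReal.tsum_mul_left]
        rfl

lemma Td_bind_const (p q : PMF ℕ) (κ : ℕ → PMF ℕ) :
    Td (p.bind κ) (q.bind κ) ≤ Td p q := by
  have step1 : ∀ x : ℕ, (p.bind κ) x - (q.bind κ) x ≤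
      ∑' n, (p n - q n) * κ n x := by
    intro x
    rw [PMF.bind_apply, PMF.bind_apply]
    refine le_trans tsum_tsub_le (ENNReal.tsum_le_tsum fun n => ?_)
    rw [ENNReal.sub_mul fun _ _ => PMF.apply_ne_top (κ n) x]
  calc Td (p.bind κ) (q.bind κ)
      ≤ ∑' x, ∑' n, (p n - q n) * κ n x := ENNReal.tsum_le_tsum step1
    _ = ∑' n, ∑' x, (p n - q n) * κ n x := ENNReal.tsum_comm
    _ = ∑' n, (p n - q n) := by
        refine tsum_congr fun n => ?_
        rw [ENNReal.tsum_mul_left, (κ n).tsum_coe, mul_one]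
    _ = Td p q := rfl

lemma Td_map (f : ℕ → ℕ) (p q : PMF ℕ) :
    Td (p.map f) (q.map f) ≤ Td p q :=
  Td_bind_const p q (PMF.pure ∘ f)

lemma Td_self (p : PMF ℕ) : Td p p = 0 := by
  simp [Td]

lemma Td_iterConv (ζ₁ ζ₂ : PMF ℕ) (n : ℕ) :
    Td (iterConv ζ₁ n) (iterConv ζ₂ n) ≤ n * Td ζ₁ ζ₂ := by
  induction n with
  | zero => simp [iterConv, Td_self]
  | succ n ih =>
      have hmix : Td ((iterConv ζ₁ n).bind fun a => ζ₁.map fun b => a + b)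
          ((iterConv ζ₁ n).bind fun a => ζ₂.map fun b => a + b) ≤ Td ζ₁ ζ₂ := by
        refine le_trans (Td_bind_bind _ _ _) ?_
        calc ∑' a, (iterConv ζ₁ n) a * Td (ζ₁.map fun b => a + b) (ζ₂.map fun b => a + b)
            ≤ ∑' a, (iterConv ζ₁ n) a * Td ζ₁ ζ₂ :=
              ENNReal.tsum_le_tsum fun a =>
                mul_le_mul_right (Td_map _ ζ₁ ζ₂) _
          _ = Td ζ₁ ζ₂ := by
              rw [ENNReal.tsum_mul_right, (iterConv ζ₁ n).tsum_coe, one_mul]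
      have hbase : Td ((iterConv ζ₁ n).bind fun a => ζ₂.map fun b => a + b)
          ((iterConv ζ₂ n).bind fun a => ζ₂.map fun b => a + b) ≤
            Td (iterConv ζ₁ n) (iterConv ζ₂ n) :=
        Td_bind_const _ _ _
      calc Td (iterConv ζ₁ (n + 1)) (iterConv ζ₂ (n + 1))
          ≤ Td ((iterConv ζ₁ n).bind fun a => ζ₁.map fun b => a + b)
              ((iterConv ζ₁ n).bind fun a => ζ₂.map fun b => a + b) +
            Td ((iterConv ζ₁ n).bind fun a => ζ₂.map fun b => a + b)
              ((iterConv ζ₂ n).bind fun a => ζ₂.map fun b => a + b) :=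
            Td_triangle _ _ _
        _ ≤ Td ζ₁ ζ₂ + n * Td ζ₁ ζ₂ := add_le_add hmix (le_trans hbase ih)
        _ = (n + 1 : ℕ) * Td ζ₁ ζ₂ := by
            push_cast
            ring

lemma poisson_mean (lam : ℝ≥0) :
    ∑' n : ℕ, poissonPMF lam n * (n : ℝ≥0∞) = (lam : ℝ≥0∞) := by
  have hpt : ∀ n : ℕ, poissonPMF lam n * (n : ℝ≥0∞) =
      ENNReal.ofReal (poissonPMFReal lam n * n) := by
    intro n
    rw [ENNReal.ofReal_mul poissonPMFReal_nonneg]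
    congr 1
    simp
  set g : ℕ → ℝ := fun n => poissonPMFReal lam n * n with hg
  have hsucc : ∀ n : ℕ, g (n + 1) = lam * poissonPMFReal lam n := by
    intro n
    simp only [hg, poissonPMFReal, Nat.factorial_succ]
    have h1 : ((n + 1 : ℕ) : ℝ) ≠ 0 := by positivity
    have h2 : ((Nat.factorial n : ℕ) : ℝ) ≠ 0 := by
      exact_mod_cast Nat.factorial_ne_zero n
    push_cast
    field_simp
    ring
  have hsum_shift : Summable fun n => g (n + 1) := by
    refine Summable.congr ((poissonPMFRealSum lam).summable.mul_left (lam : ℝ)) ?_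
    intro n
    rw [hsucc]
    rfl
  have hsum : Summable g := (summable_nat_add_iff 1).mp hsum_shift
  have hg0 : ∀ n, 0 ≤ g n := fun n =>
    mul_nonneg poissonPMFReal_nonneg (Nat.cast_nonneg n)
  have htsum : ∑' n, g n = (lam : ℝ) := by
    rw [Summable.tsum_eq_zero_add hsum]
    have h0 : g 0 = 0 := by simp [hg]
    rw [h0, zero_add]
    have : ∑' n, g (n + 1) = ∑' n, (lam : ℝ) * poissonPMFReal lam n :=
      tsum_congr fun n => hsucc n
    have hone : ∑' n, poissonPMFReal lam n = 1 := (poissonPMFRealSum lam).tsum_eq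
    rw [this, tsum_mul_left, hone, mul_one]
  calc ∑' n : ℕ, poissonPMF lam n * (n : ℝ≥0∞)
      = ∑' n : ℕ, ENNReal.ofReal (g n) := tsum_congr hpt
    _ = ENNReal.ofReal (∑' n, g n) := (ENNReal.ofReal_tsum_of_nonneg hg0 hsum).symm
    _ = (lam : ℝ≥0∞) := by rw [htsum, ENNReal.ofReal_coe_nnreal]

lemma main_aux (lam₁ lam₂ : ℝ≥0) (ζ₁ ζ₂ : PMF ℕ) :
    Td (compoundPoisson lam₁ ζ₁) (compoundPoisson lam₂ ζ₂) ≤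
      (lam₁ : ℝ≥0∞) * Td ζ₁ ζ₂ + Td (poissonPMF lam₁) (poissonPMF lam₂) := by
  have h1 : Td ((poissonPMF lam₁).bind (iterConv ζ₁))
      ((poissonPMF lam₁).bind (iterConv ζ₂)) ≤ (lam₁ : ℝ≥0∞) * Td ζ₁ ζ₂ := by
    refine le_trans (Td_bind_bind _ _ _) ?_
    calc ∑' n, poissonPMF lam₁ n * Td (iterConv ζ₁ n) (iterConv ζ₂ n)
        ≤ ∑' n, poissonPMF lam₁ n * ((n : ℝ≥0∞) * Td ζ₁ ζ₂) :=
          ENNReal.tsum_le_tsum fun n =>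
            mul_le_mul_right (Td_iterConv ζ₁ ζ₂ n) _
      _ = (∑' n, poissonPMF lam₁ n * (n : ℝ≥0∞)) * Td ζ₁ ζ₂ := by
          rw [← ENNReal.tsum_mul_right]
          exact tsum_congr fun n => (mul_assoc _ _ _).symm
      _ = (lam₁ : ℝ≥0∞) * Td ζ₁ ζ₂ := by rw [poisson_mean]
  have h2 : Td ((poissonPMF lam₁).bind (iterConv ζ₂))
      ((poissonPMF lam₂).bind (iterConv ζ₂)) ≤
        Td (poissonPMF lam₁) (poissonPMF lam₂) :=
    Td_bind_const _ _ _
  calc Td (compoundPoisson lam₁ ζ₁) (compoundPoisson lam₂ ζ₂)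
      ≤ Td ((poissonPMF lam₁).bind (iterConv ζ₁))
          ((poissonPMF lam₁).bind (iterConv ζ₂)) +
        Td ((poissonPMF lam₁).bind (iterConv ζ₂))
          ((poissonPMF lam₂).bind (iterConv ζ₂)) := Td_triangle _ _ _
    _ ≤ (lam₁ : ℝ≥0∞) * Td ζ₁ ζ₂ + Td (poissonPMF lam₁) (poissonPMF lam₂) :=
        add_le_add h1 h2

lemma main_real (lam₁ lam₂ : ℝ≥0) (ζ₁ ζ₂ : PMF ℕ) :
    pmfTVDist (compoundPoisson lam₁ ζ₁) (compoundPoisson lam₂ ζ₂) ≤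
      (lam₁ : ℝ) * pmfTVDist ζ₁ ζ₂ + pmfTVDist (poissonPMF lam₁) (poissonPMF lam₂) := by
  rw [tv_eq, tv_eq, tv_eq]
  have hfin : (lam₁ : ℝ≥0∞) * Td ζ₁ ζ₂ + Td (poissonPMF lam₁) (poissonPMF lam₂) ≠ ∞ := by
    refine ENNReal.add_ne_top.mpr ⟨?_, Td_ne_top _ _⟩
    exact ENNReal.mul_ne_top ENNReal.coe_ne_top (Td_ne_top _ _)
  refine le_trans (ENNReal.toReal_mono hfin (main_aux lam₁ lam₂ ζ₁ ζ₂)) ?_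
  rw [ENNReal.toReal_add (ENNReal.mul_ne_top ENNReal.coe_ne_top (Td_ne_top _ _))
    (Td_ne_top _ _), ENNReal.toReal_mul]
  simp

end StmtAux

/-- Lemma: `d_TV(CP(λ₁,ζ₁), CP(λ₂,ζ₂)) ≤ min{λ₁,λ₂} d_TV(ζ₁,ζ₂) + d_TV(Pois(λ₁), Pois(λ₂))`,
for increment distributions `ζ₁, ζ₂` supported on the positive integers. -/
theorem stmt_2 (lam₁ lam₂ : ℝ≥0) (h₁ : 0 < lam₁) (h₂ : 0 < lam₂)
    (ζ₁ ζ₂ : PMF ℕ) (hζ₁ : ζ₁ 0 = 0) (hζ₂ : ζ₂ 0 = 0) :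
    pmfTVDist (compoundPoisson lam₁ ζ₁) (compoundPoisson lam₂ ζ₂) ≤
      min (lam₁ : ℝ) (lam₂ : ℝ) * pmfTVDist ζ₁ ζ₂ +
        pmfTVDist (poissonPMF lam₁) (poissonPMF lam₂) := by
  rcases le_total (lam₁ : ℝ) (lam₂ : ℝ) with h | h
  · rw [min_eq_left h]
    exact StmtAux.main_real lam₁ lam₂ ζ₁ ζ₂
  · rw [min_eq_right h,
      StmtAux.pmfTVDist_comm (compoundPoisson lam₁ ζ₁) (compoundPoisson lam₂ ζ₂),
      StmtAux.pmfTVDist_comm ζ₁ ζ₂,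
      StmtAux.pmfTVDist_comm (poissonPMF lam₁) (poissonPMF lam₂)]
    exact StmtAux.main_real lam₂ lam₁ ζ₂ ζ₁
end

section
/- Let $x_1, x_2$ be unit vectors in $\mathbb{R}^n$ and let $D \in \mathbb{R}^{n \times n}$ be invertible with largest and smallest singular values $S_{\max}(D)$ and $S_{\min}(D)$. Define $w_i = D x_i / \|D x_i\|_2$ for $i = 1, 2$. Then $\frac{S_{\min}(D)}{S_{\max}(D)} \|x_1 - x_2\|_2 \leq \|w_1 - w_2\|_2 \leq \frac{S_{\max}(D)}{S_{\min}(D)} \|x_1 - x_2\|_2$. -/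
open scoped Matrix

lemma normA {E : Type*} [NormedAddCommGroup E] [InnerProductSpace ℝ E]
    (u v : E) (c : ℝ) (hc : 0 ≤ c) (hcu : c ≤ ‖u‖) (hcv : c ≤ ‖v‖)
    (hu0 : u ≠ 0) (hv0 : v ≠ 0) :
    c * ‖‖u‖⁻¹ • u - ‖v‖⁻¹ • v‖ ≤ ‖u - v‖ := by
  set a := ‖u‖ with ha
  set b := ‖v‖ with hb
  have ha0 : 0 < a := norm_pos_iff.mpr hu0
  have hb0 : 0 < b := norm_pos_iff.mpr hv0
  set t : ℝ := inner ℝ u v with ht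
  set N := ‖a⁻¹ • u - b⁻¹ • v‖ with hN
  have h1 : ‖u - v‖ ^ 2 = a ^ 2 - 2 * t + b ^ 2 := by
    rw [norm_sub_sq_real]
  have h2 : N ^ 2 = 2 - 2 * (a⁻¹ * (b⁻¹ * t)) := by
    rw [hN, norm_sub_sq_real, norm_smul, norm_smul, real_inner_smul_left,
      real_inner_smul_right]
    simp only [Real.norm_eq_abs, abs_inv, abs_of_pos ha0, abs_of_pos hb0, ← ha, ← hb, ← ht]
    field_simp
    ring
  have hab : a * b * N ^ 2 = 2 * (a * b) - 2 * t := by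
    rw [h2]; field_simp
  have hc2 : c ^ 2 ≤ a * b := by nlinarith
  have hNn : 0 ≤ N := norm_nonneg _
  have hstep : c ^ 2 * N ^ 2 ≤ a * b * N ^ 2 :=
    mul_le_mul_of_nonneg_right hc2 (sq_nonneg N)
  have key : (c * N) ^ 2 ≤ ‖u - v‖ ^ 2 := by nlinarith [sq_nonneg (a - b)]
  nlinarith [norm_nonneg (u - v), mul_nonneg hc hNn]

lemma upperB {n : ℕ} (T T' : EuclideanSpace ℝ (Fin n) →L[ℝ] EuclideanSpace ℝ (Fin n))
    (hTT : ∀ x, T' (T x) = x) (x₁ x₂ : EuclideanSpace ℝ (Fin n))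
    (hx₁ : ‖x₁‖ = 1) (hx₂ : ‖x₂‖ = 1) :
    ‖‖T x₁‖⁻¹ • T x₁ - ‖T x₂‖⁻¹ • T x₂‖ ≤ ‖T‖ * ‖T'‖ * ‖x₁ - x₂‖ := by
  have hx10 : x₁ ≠ 0 := by intro h; rw [h] at hx₁; simp at hx₁
  have hx20 : x₂ ≠ 0 := by intro h; rw [h] at hx₂; simp at hx₂
  have hu0 : T x₁ ≠ 0 := by
    intro h; apply hx10; rw [← hTT x₁, h, map_zero]
  have hv0 : T x₂ ≠ 0 := by
    intro h; apply hx20; rw [← hTT x₂, h, map_zero]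
  have hT'1 : 1 ≤ ‖T'‖ * ‖T x₁‖ := by
    calc (1 : ℝ) = ‖x₁‖ := hx₁.symm
    _ = ‖T' (T x₁)‖ := by rw [hTT]
    _ ≤ ‖T'‖ * ‖T x₁‖ := T'.le_opNorm _
  have hT'2 : 1 ≤ ‖T'‖ * ‖T x₂‖ := by
    calc (1 : ℝ) = ‖x₂‖ := hx₂.symm
    _ = ‖T' (T x₂)‖ := by rw [hTT]
    _ ≤ ‖T'‖ * ‖T x₂‖ := T'.le_opNorm _
  have hT'pos : 0 < ‖T'‖ := by
    by_contra h
    push_neg at h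
    have : ‖T'‖ = 0 := le_antisymm h (norm_nonneg _)
    rw [this, zero_mul] at hT'1; linarith
  have hcu : ‖T'‖⁻¹ ≤ ‖T x₁‖ := by
    rw [inv_le_iff_one_le_mul₀' hT'pos]; exact hT'1
  have hcv : ‖T'‖⁻¹ ≤ ‖T x₂‖ := by
    rw [inv_le_iff_one_le_mul₀' hT'pos]; exact hT'2
  have h := normA (T x₁) (T x₂) ‖T'‖⁻¹ (inv_nonneg.mpr (norm_nonneg _)) hcu hcv hu0 hv0
  have h2 : ‖T x₁ - T x₂‖ ≤ ‖T‖ * ‖x₁ - x₂‖ := by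
    rw [← map_sub]; exact T.le_opNorm _
  rw [inv_mul_le_iff₀ hT'pos] at h
  calc ‖‖T x₁‖⁻¹ • T x₁ - ‖T x₂‖⁻¹ • T x₂‖ ≤ ‖T'‖ * ‖T x₁ - T x₂‖ := h
  _ ≤ ‖T'‖ * (‖T‖ * ‖x₁ - x₂‖) := by
      exact mul_le_mul_of_nonneg_left h2 (norm_nonneg _)
  _ = ‖T‖ * ‖T'‖ * ‖x₁ - x₂‖ := by ring

/-- Largest singular value of a real matrix: the operator norm of the induced map on
Euclidean space. -/
noncomputable def Smax {n : ℕ} (D : Matrix (Fin n) (Fin n) ℝ) : ℝ :=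
  ‖Matrix.toEuclideanCLM (𝕜 := ℝ) D‖

/-- Smallest singular value of a real matrix: the reciprocal of the operator norm of
the induced map of the inverse matrix. -/
noncomputable def Smin {n : ℕ} (D : Matrix (Fin n) (Fin n) ℝ) : ℝ :=
  ‖Matrix.toEuclideanCLM (𝕜 := ℝ) D⁻¹‖⁻¹

/-- The normalization `D x / ‖D x‖` of the image of `x` under `D`. -/
noncomputable def normalizeImg {n : ℕ} (D : Matrix (Fin n) (Fin n) ℝ)
    (x : EuclideanSpace ℝ (Fin n)) : EuclideanSpace ℝ (Fin n) :=
  ‖Matrix.toEuclideanCLM (𝕜 := ℝ) D x‖⁻¹ • Matrix.toEuclideanCLM (𝕜 := ℝ) D x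

/-- Lemma: for unit vectors `x₁, x₂` and an invertible matrix `D`, with `wᵢ = Dxᵢ/‖Dxᵢ‖`,
`(S_min(D)/S_max(D)) ‖x₁ - x₂‖ ≤ ‖w₁ - w₂‖ ≤ (S_max(D)/S_min(D)) ‖x₁ - x₂‖`. -/
theorem stmt_10 {n : ℕ} (D : Matrix (Fin n) (Fin n) ℝ) (hD : IsUnit D)
    (x₁ x₂ : EuclideanSpace ℝ (Fin n)) (hx₁ : ‖x₁‖ = 1) (hx₂ : ‖x₂‖ = 1) :
    Smin D / Smax D * ‖x₁ - x₂‖ ≤ ‖normalizeImg D x₁ - normalizeImg D x₂‖ ∧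
      ‖normalizeImg D x₁ - normalizeImg D x₂‖ ≤ Smax D / Smin D * ‖x₁ - x₂‖ := by
  set T := Matrix.toEuclideanCLM (𝕜 := ℝ) D with hT
  set T' := Matrix.toEuclideanCLM (𝕜 := ℝ) D⁻¹ with hT'
  have hdet : IsUnit D.det := (Matrix.isUnit_iff_isUnit_det D).mp hD
  have hmul1 : T' * T = 1 := by
    rw [hT, hT', ← map_mul, Matrix.nonsing_inv_mul D hdet, map_one]
  have hmul2 : T * T' = 1 := by
    rw [hT, hT', ← map_mul, Matrix.mul_nonsing_inv D hdet, map_one]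
  have hTT : ∀ x, T' (T x) = x := fun x => by
    rw [← ContinuousLinearMap.mul_apply, hmul1, ContinuousLinearMap.one_apply]
  have hTT' : ∀ x, T (T' x) = x := fun x => by
    rw [← ContinuousLinearMap.mul_apply, hmul2, ContinuousLinearMap.one_apply]
  have hx10 : x₁ ≠ 0 := by intro h; rw [h] at hx₁; simp at hx₁
  have hx20 : x₂ ≠ 0 := by intro h; rw [h] at hx₂; simp at hx₂
  have hu0 : T x₁ ≠ 0 := fun h => hx10 (by rw [← hTT x₁, h, map_zero])
  have hv0 : T x₂ ≠ 0 := fun h => hx20 (by rw [← hTT x₂, h, map_zero])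
  have hT'pos : 0 < ‖T'‖ := by
    refine norm_pos_iff.mpr fun h => hx10 ?_
    have := hTT x₁
    rw [h] at this
    simpa using this.symm
  have hTpos : 0 < ‖T‖ := by
    refine norm_pos_iff.mpr fun h => hx10 ?_
    have := hTT x₁
    rw [h] at this
    simpa using this.symm
  -- unit norms of w_i
  have hnu : ‖T x₁‖ ≠ 0 := norm_ne_zero_iff.mpr hu0
  have hnv : ‖T x₂‖ ≠ 0 := norm_ne_zero_iff.mpr hv0
  set w₁ : EuclideanSpace ℝ (Fin n) := ‖T x₁‖⁻¹ • T x₁ with hw₁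
  set w₂ : EuclideanSpace ℝ (Fin n) := ‖T x₂‖⁻¹ • T x₂ with hw₂
  have hnw₁ : ‖w₁‖ = 1 := by
    rw [hw₁, norm_smul, Real.norm_eq_abs, abs_inv, abs_norm, inv_mul_cancel₀ hnu]
  have hnw₂ : ‖w₂‖ = 1 := by
    rw [hw₂, norm_smul, Real.norm_eq_abs, abs_inv, abs_norm, inv_mul_cancel₀ hnv]
  have hNimg : normalizeImg D x₁ - normalizeImg D x₂ = w₁ - w₂ := rfl
  constructor
  · -- lower bound: apply upperB to T', with w₁ w₂
    have hTw1 : T' w₁ = ‖T x₁‖⁻¹ • x₁ := by rw [hw₁, map_smul, hTT]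
    have hTw2 : T' w₂ = ‖T x₂‖⁻¹ • x₂ := by rw [hw₂, map_smul, hTT]
    have hnTw1 : ‖T' w₁‖ = ‖T x₁‖⁻¹ := by
      rw [hTw1, norm_smul, Real.norm_eq_abs, abs_inv, abs_norm, hx₁, mul_one]
    have hnTw2 : ‖T' w₂‖ = ‖T x₂‖⁻¹ := by
      rw [hTw2, norm_smul, Real.norm_eq_abs, abs_inv, abs_norm, hx₂, mul_one]
    have key := upperB T' T hTT' w₁ w₂ hnw₁ hnw₂
    have e1 : ‖T' w₁‖⁻¹ • T' w₁ = x₁ := by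
      rw [hnTw1, hTw1, smul_smul, inv_inv, mul_inv_cancel₀ hnu, one_smul]
    have e2 : ‖T' w₂‖⁻¹ • T' w₂ = x₂ := by
      rw [hnTw2, hTw2, smul_smul, inv_inv, mul_inv_cancel₀ hnv, one_smul]
    rw [e1, e2] at key
    rw [hNimg]
    rw [show Smin D / Smax D = (‖T‖ * ‖T'‖)⁻¹ by
      rw [Smin, Smax, ← hT, ← hT', mul_inv, div_eq_mul_inv]; ring]
    rw [inv_mul_le_iff₀ (by positivity)]
    calc ‖x₁ - x₂‖ ≤ ‖T'‖ * ‖T‖ * ‖w₁ - w₂‖ := key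
    _ = ‖T‖ * ‖T'‖ * ‖w₁ - w₂‖ := by ring
  · have key := upperB T T' hTT x₁ x₂ hx₁ hx₂
    rw [hNimg]
    rw [show Smax D / Smin D = ‖T‖ * ‖T'‖ by
      rw [Smin, Smax, ← hT, ← hT', div_eq_mul_inv, inv_inv]]
    exact key
end

section
/- Let $n \geq 4$ and define $P_n(r) = \frac{b_n}{2} \int_{1 - r^2/2}^{1} (1 - u^2)^{(n-4)/2}\, du$ for $r \in [0, \sqrt{2}]$, where $b_n = \frac{2\Gamma((n-1)/2)}{\sqrt{\pi}\,\Gamma((n-2)/2)}$, and $a_n = \frac{b_n}{2(n-2)}$. Then for all $r \in (0, \sqrt{2}]$, $a_n r^{n-2}\left(1 - \frac{r^2}{4}\right)^{(n-4)/2} \leq P_n(r) \leq a_n r^{n-2}$. -/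
/-- The constant `b_n = 2Γ((n-1)/2) / (√π Γ((n-2)/2))`. -/
noncomputable def bCoef (n : ℕ) : ℝ :=
  2 * Real.Gamma (((n : ℝ) - 1) / 2) / (Real.sqrt Real.pi * Real.Gamma (((n : ℝ) - 2) / 2))

/-- The constant `a_n = b_n / (2(n-2))`. -/
noncomputable def aCoef (n : ℕ) : ℝ := bCoef n / (2 * ((n : ℝ) - 2))

/-- The normalized spherical cap area
`P_n(r) = (b_n/2) ∫_{1 - r²/2}^1 (1 - u²)^{(n-4)/2} du` (for `0 ≤ r ≤ √2`). -/
noncomputable def capArea (n : ℕ) (r : ℝ) : ℝ :=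
  bCoef n / 2 * ∫ u in (1 - r ^ 2 / 2)..1, (1 - u ^ 2) ^ (((n : ℝ) - 4) / 2)

lemma aux_integral (α : ℝ) (hα : 0 ≤ α) (a : ℝ) (ha : a ≤ 1) :
    ∫ u in a..1, (1 - u) ^ α = (1 - a) ^ (α + 1) / (α + 1) := by
  have h := intervalIntegral.integral_comp_sub_left (a := a) (b := 1)
    (fun x : ℝ => x ^ α) 1
  simp only [sub_self] at h
  rw [h, integral_rpow (Or.inl (by linarith))]
  rw [Real.zero_rpow (by positivity)]
  ring

/-- Lemma: for `n ≥ 4` and `0 < r ≤ √2`,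
`a_n r^{n-2} (1 - r²/4)^{(n-4)/2} ≤ P_n(r) ≤ a_n r^{n-2}`. -/
theorem stmt_13 (n : ℕ) (hn : 4 ≤ n) (r : ℝ) (hr : 0 < r) (hr2 : r ≤ Real.sqrt 2) :
    aCoef n * r ^ (n - 2) * (1 - r ^ 2 / 4) ^ (((n : ℝ) - 4) / 2) ≤ capArea n r ∧
      capArea n r ≤ aCoef n * r ^ (n - 2) := by
  have hn' : (4 : ℝ) ≤ (n : ℝ) := by exact_mod_cast hn
  set α : ℝ := ((n : ℝ) - 4) / 2 with hαdef
  have hα : 0 ≤ α := by rw [hαdef]; linarith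
  have hr2sq : r ^ 2 ≤ 2 := by
    have h := Real.sq_sqrt (by norm_num : (0:ℝ) ≤ 2)
    nlinarith [Real.sqrt_nonneg 2]
  set a : ℝ := 1 - r ^ 2 / 2 with hadef
  have ha0 : 0 ≤ a := by rw [hadef]; linarith
  have ha1 : a ≤ 1 := by rw [hadef]; nlinarith
  -- positivity of bCoef
  have hb : 0 < bCoef n := by
    unfold bCoef
    have h1 : 0 < Real.Gamma (((n : ℝ) - 1) / 2) := Real.Gamma_pos_of_pos (by linarith)
    have h2 : 0 < Real.Gamma (((n : ℝ) - 2) / 2) := Real.Gamma_pos_of_pos (by linarith)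
    have h3 : 0 < Real.sqrt Real.pi := Real.sqrt_pos.mpr Real.pi_pos
    positivity
  -- continuity / integrability
  have hcont : Continuous fun u : ℝ => (1 - u ^ 2) ^ α :=
    (continuous_const.sub (continuous_pow 2)).rpow_const (fun x => Or.inr hα)
  have hint : IntervalIntegrable (fun u : ℝ => (1 - u ^ 2) ^ α) MeasureTheory.volume a 1 :=
    hcont.intervalIntegrable a 1
  have hcont2 : ∀ c : ℝ, Continuous fun u : ℝ => c * (1 - u) ^ α := fun c =>
    continuous_const.mul ((continuous_const.sub continuous_id).rpow_const (fun x => Or.inr hα))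
  -- value of the comparison integrals
  have hI : ∀ c : ℝ, ∫ u in a..1, c * (1 - u) ^ α = c * ((r ^ 2 / 2) ^ (α + 1) / (α + 1)) := by
    intro c
    rw [intervalIntegral.integral_const_mul, aux_integral α hα a ha1]
    rw [hadef]; ring_nf
  -- algebra: bCoef/2 * (2^α * ((r²/2)^(α+1)/(α+1))) = aCoef * r^(n-2)
  have hpow : (r ^ 2 / 2 : ℝ) ^ (α + 1) = r ^ (n - 2) / 2 ^ (α + 1) := by
    rw [Real.div_rpow (sq_nonneg r) (by norm_num)]
    congr 1
    rw [← Real.rpow_natCast r 2, ← Real.rpow_mul hr.le, ← Real.rpow_natCast r (n - 2)]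
    congr 1
    have : ((n - 2 : ℕ) : ℝ) = (n : ℝ) - 2 := by
      have : (2 : ℕ) ≤ n := by omega
      push_cast [this]; ring
    rw [this, hαdef]; ring
  have h2pow : (2 : ℝ) ^ (α + 1) = 2 ^ α * 2 := by
    rw [Real.rpow_add (by norm_num), Real.rpow_one]
  have hα1 : α + 1 = ((n : ℝ) - 2) / 2 := by rw [hαdef]; ring
  have h2α : (0 : ℝ) < 2 ^ α := Real.rpow_pos_of_pos (by norm_num) α
  have halg : bCoef n / 2 * (2 ^ α * ((r ^ 2 / 2) ^ (α + 1) / (α + 1))) =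
      aCoef n * r ^ (n - 2) := by
    rw [hpow, h2pow, hα1]
    unfold aCoef
    have hn2 : (n : ℝ) - 2 ≠ 0 := by linarith
    field_simp
  have h14 : (0 : ℝ) ≤ 1 - r ^ 2 / 4 := by linarith
  constructor
  · -- lower bound
    have hlb : ∀ u ∈ Set.Icc a 1,
        (2 ^ α * (1 - r ^ 2 / 4) ^ α) * (1 - u) ^ α ≤ (1 - u ^ 2) ^ α := by
      intro u hu
      obtain ⟨hua, hu1⟩ := hu
      have h1u : 0 ≤ 1 - u := by linarith
      have hc : (2 : ℝ) - r ^ 2 / 2 ≤ 1 + u := by rw [hadef] at hua; linarith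
      have hcpos : (0 : ℝ) ≤ 2 - r ^ 2 / 2 := by linarith
      have h1u' : (0 : ℝ) ≤ 1 + u := by linarith
      calc (2 ^ α * (1 - r ^ 2 / 4) ^ α) * (1 - u) ^ α
          = (2 * (1 - r ^ 2 / 4)) ^ α * (1 - u) ^ α := by
            rw [Real.mul_rpow (by norm_num) h14]
        _ ≤ (1 + u) ^ α * (1 - u) ^ α := by
            apply mul_le_mul_of_nonneg_right _ (Real.rpow_nonneg h1u α)
            apply Real.rpow_le_rpow (by linarith) (by linarith) hα
        _ = (1 - u ^ 2) ^ α := by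
            rw [← Real.mul_rpow h1u' h1u]
            congr 1; ring
    have hmono := intervalIntegral.integral_mono_on ha1
      ((hcont2 (2 ^ α * (1 - r ^ 2 / 4) ^ α)).intervalIntegrable a 1) hint hlb
    rw [hI] at hmono
    have := mul_le_mul_of_nonneg_left hmono (by positivity : (0:ℝ) ≤ bCoef n / 2)
    calc aCoef n * r ^ (n - 2) * (1 - r ^ 2 / 4) ^ α
        = bCoef n / 2 * (2 ^ α * (1 - r ^ 2 / 4) ^ α * ((r ^ 2 / 2) ^ (α + 1) / (α + 1))) := by
          rw [← halg]; ring
      _ ≤ capArea n r := by unfold capArea; rw [← hadef, ← hαdef]; exact this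
  · -- upper bound
    have hub : ∀ u ∈ Set.Icc a 1, (1 - u ^ 2) ^ α ≤ 2 ^ α * (1 - u) ^ α := by
      intro u hu
      obtain ⟨hua, hu1⟩ := hu
      have h1u : 0 ≤ 1 - u := by linarith
      have h1u' : (0 : ℝ) ≤ 1 + u := by linarith
      calc (1 - u ^ 2) ^ α = (1 + u) ^ α * (1 - u) ^ α := by
            rw [← Real.mul_rpow h1u' h1u]; congr 1; ring
        _ ≤ 2 ^ α * (1 - u) ^ α := by
            apply mul_le_mul_of_nonneg_right _ (Real.rpow_nonneg h1u α)
            apply Real.rpow_le_rpow h1u' (by linarith) hα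
    have hmono := intervalIntegral.integral_mono_on ha1 hint
      ((hcont2 (2 ^ α)).intervalIntegrable a 1) hub
    rw [hI] at hmono
    have := mul_le_mul_of_nonneg_left hmono (by positivity : (0:ℝ) ≤ bCoef n / 2)
    calc capArea n r ≤ bCoef n / 2 * (2 ^ α * ((r ^ 2 / 2) ^ (α + 1) / (α + 1))) := by
          unfold capArea; rw [← hadef, ← hαdef]; exact this
      _ = aCoef n * r ^ (n - 2) := halg
end

section
/- Let $n \geq 4$ and $P_n(r) = \frac{b_n}{2} \int_{1-r^2/2}^{1}(1-u^2)^{(n-4)/2}\,du$ for $0 \leq r \leq \sqrt 2$ with $P_n$ extended by $P_n(r) = 1 - P_n(\sqrt{4-r^2})$ for $\sqrt 2 < r \leq 2$ and $P_n(r)=1$ for $r>2$, where $b_n = \frac{2\Gamma((n-1)/2)}{\sqrt{\pi}\Gamma((n-2)/2)}$. Then for any $\alpha > 1$ and $r > 0$, $P_n(\alpha r) \leq \alpha^{n-2} P_n(r)$. -/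
open MeasureTheory intervalIntegral Set

/-- The normalized spherical cap area `P_n(r)` extended to all `r > 0`:
`P_n(r) = 1 - P_n(√(4 - r²))` for `√2 < r ≤ 2` and `P_n(r) = 1` for `r > 2`. -/
noncomputable def capAreaExt (n : ℕ) (r : ℝ) : ℝ :=
  if r ≤ Real.sqrt 2 then capArea n r
  else if r ≤ 2 then 1 - capArea n (Real.sqrt (4 - r ^ 2))
  else 1

/- ### Auxiliary definitions and lemmas -/

noncomputable def sExp (n : ℕ) : ℝ := ((n : ℝ) - 4) / 2
noncomputable def phiFn (n : ℕ) (x : ℝ) : ℝ := x ^ (n - 3) * (1 - x ^ 2 / 4) ^ sExp n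

lemma sExp_nonneg {n : ℕ} (hn : 4 ≤ n) : 0 ≤ sExp n := by
  have : (4:ℝ) ≤ n := by exact_mod_cast hn
  unfold sExp; linarith

lemma gCont {n : ℕ} (hn : 4 ≤ n) : Continuous fun u : ℝ => (1 - u ^ 2) ^ sExp n := by
  apply Continuous.rpow_const (by fun_prop)
  exact fun x => Or.inr (sExp_nonneg hn)

lemma phiCont {n : ℕ} (hn : 4 ≤ n) : Continuous (phiFn n) := by
  apply Continuous.mul (by fun_prop)
  apply Continuous.rpow_const (by fun_prop)
  exact fun x => Or.inr (sExp_nonneg hn)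

lemma phi_nonneg {n : ℕ} {x : ℝ} (hx : 0 ≤ x) (hx2 : x ≤ 2) : 0 ≤ phiFn n x := by
  apply mul_nonneg (pow_nonneg hx _)
  apply Real.rpow_nonneg
  nlinarith

/-- Change of variables `u = 1 - x²/2`. -/
lemma capArea_int_eq {n : ℕ} (hn : 4 ≤ n) {r : ℝ} (hr0 : 0 ≤ r) (hr2 : r ≤ 2) :
    (∫ u in (1 - r ^ 2 / 2)..1, (1 - u ^ 2) ^ sExp n) = ∫ x in (0:ℝ)..r, phiFn n x := by
  have key := intervalIntegral.integral_comp_smul_deriv (a := 0) (b := r)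
    (f := fun x => 1 - x ^ 2 / 2) (f' := fun x => -x)
    (g := fun u => (1 - u ^ 2) ^ sExp n)
    (fun x _ => by
      have : HasDerivAt (fun x : ℝ => 1 - x ^ 2 / 2) (-(2 * x / 2)) x := by
        simpa using (((hasDerivAt_pow 2 x).div_const 2).const_sub 1)
      simpa using this.congr_deriv (by ring))
    (by fun_prop) (gCont hn)
  simp only [Function.comp_apply] at key
  have h0 : (1 : ℝ) - 0 ^ 2 / 2 = 1 := by norm_num
  rw [h0] at key
  have : (∫ x in (0:ℝ)..r, (-x) • (1 - (1 - x ^ 2 / 2) ^ 2) ^ sExp n)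
      = -∫ x in (0:ℝ)..r, phiFn n x := by
    rw [← intervalIntegral.integral_neg]
    apply intervalIntegral.integral_congr
    intro x hx
    rw [uIcc_of_le hr0] at hx
    obtain ⟨hx0, hxr⟩ := hx
    have hb : (0:ℝ) ≤ 1 - x ^ 2 / 4 := by nlinarith
    have h1 : 1 - (1 - x ^ 2 / 2) ^ 2 = x ^ 2 * (1 - x ^ 2 / 4) := by ring
    have h2 : (x ^ 2 * (1 - x ^ 2 / 4)) ^ sExp n
        = (x ^ 2) ^ sExp n * (1 - x ^ 2 / 4) ^ sExp n :=
      Real.mul_rpow (sq_nonneg x) hb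
    have h3 : (x ^ 2 : ℝ) ^ sExp n = x ^ (n - 4) := by
      rw [← Real.rpow_natCast x 2, ← Real.rpow_mul hx0]
      have : (2 : ℝ) * sExp n = ((n - 4 : ℕ) : ℝ) := by
        unfold sExp
        have : ((n - 4 : ℕ) : ℝ) = (n : ℝ) - 4 := by
          have : (4:ℕ) ≤ n := hn
          push_cast [this]; ring
        rw [this]; ring
      push_cast
      rw [this, Real.rpow_natCast]
    have h4 : x * x ^ (n - 4) = x ^ (n - 3) := by
      rw [← pow_succ']
      congr 1
      omega
    simp only [smul_eq_mul, h1, h2, h3, phiFn]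
    ring_nf
    rw [h4]
  rw [this] at key
  have hsym : (∫ x in (1:ℝ)..(1 - r ^ 2 / 2), (1 - x ^ 2) ^ sExp n)
      = -∫ u in (1 - r ^ 2 / 2)..1, (1 - u ^ 2) ^ sExp n :=
    intervalIntegral.integral_symm _ _
  rw [hsym] at key
  linarith [key]

/-- Symmetry: `∫_{-1}^{1} = 2 ∫_0^1`. -/
lemma symm_int {n : ℕ} (hn : 4 ≤ n) :
    (∫ u in (-1:ℝ)..1, (1 - u ^ 2) ^ sExp n) = 2 * ∫ u in (0:ℝ)..1, (1 - u ^ 2) ^ sExp n := by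
  have hi : ∀ a b : ℝ, IntervalIntegrable (fun u : ℝ => (1 - u ^ 2) ^ sExp n) volume a b :=
    fun a b => (gCont hn).intervalIntegrable a b
  have hadd := intervalIntegral.integral_add_adjacent_intervals (hi (-1) 0) (hi 0 1)
  have hneg : (∫ u in (-1:ℝ)..0, (1 - u ^ 2) ^ sExp n)
      = ∫ u in (0:ℝ)..1, (1 - u ^ 2) ^ sExp n := by
    have := intervalIntegral.integral_comp_neg (a := 0) (b := 1)
      (fun u : ℝ => (1 - u ^ 2) ^ sExp n)
    simp only [neg_sq] at this
    norm_num at this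
    linarith [this]
  linarith [hadd, hneg]

/-- Jacobian substitution: `2∫_0^1 (1-u²)^s du = ∫_0^1 x^{-1/2}(1-x)^s dx`. -/
lemma sub_int {n : ℕ} (hn : 4 ≤ n) :
    (2 : ℝ) * (∫ u in (0:ℝ)..1, (1 - u ^ 2) ^ sExp n)
      = ∫ x in (0:ℝ)..1, x ^ (-(1:ℝ)/2) * (1 - x) ^ sExp n := by
  have himg : (fun u : ℝ => u ^ 2) '' Ioo 0 1 = Ioo 0 1 := by
    ext x
    constructor
    · rintro ⟨u, ⟨h1, h2⟩, rfl⟩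
      simp only
      exact ⟨by positivity, by nlinarith⟩
    · rintro ⟨h1, h2⟩
      exact ⟨Real.sqrt x, ⟨Real.sqrt_pos.mpr h1,
        by rw [show (1:ℝ) = Real.sqrt 1 by simp]; exact Real.sqrt_lt_sqrt h1.le h2⟩,
        Real.sq_sqrt h1.le⟩
  have key := integral_image_eq_integral_abs_deriv_smul (s := Ioo (0:ℝ) 1)
    (f := fun u => u ^ 2) (f' := fun u => 2 * u) measurableSet_Ioo
    (fun u _ => by simpa using (hasDerivAt_pow 2 u).hasDerivWithinAt)
    (fun a ha b hb h => by simp only at h; nlinarith [ha.1, hb.1])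
    (fun x => x ^ (-(1:ℝ)/2) * (1 - x) ^ sExp n)
  rw [himg] at key
  have key2 : (∫ u in Ioo (0:ℝ) 1, |2 * u| • ((u ^ 2) ^ (-(1:ℝ)/2) * (1 - u ^ 2) ^ sExp n))
      = ∫ u in Ioo (0:ℝ) 1, 2 * (1 - u ^ 2) ^ sExp n := by
    apply setIntegral_congr_fun measurableSet_Ioo
    intro u ⟨h1, h2⟩
    simp only
    have hps : (u ^ 2 : ℝ) ^ (-(1:ℝ)/2) = u⁻¹ := by
      rw [← Real.rpow_natCast u 2, ← Real.rpow_mul h1.le]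
      norm_num
      exact (Real.rpow_neg_one u)
    rw [abs_of_pos (by linarith), smul_eq_mul, hps]
    field_simp
  rw [key2] at key
  rw [MeasureTheory.integral_const_mul] at key
  rw [intervalIntegral.integral_of_le zero_le_one, intervalIntegral.integral_of_le zero_le_one,
    MeasureTheory.integral_Ioc_eq_integral_Ioo, MeasureTheory.integral_Ioc_eq_integral_Ioo]
  exact key.symm

/-- The Beta-function evaluation. -/
lemma K_eq {n : ℕ} (hn : 4 ≤ n) :
    (∫ x in (0:ℝ)..1, x ^ (-(1:ℝ)/2) * (1 - x) ^ sExp n)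
      = Real.Gamma (1/2) * Real.Gamma (sExp n + 1) / Real.Gamma (sExp n + 3/2) := by
  have hs := sExp_nonneg hn
  have hB := Complex.Gamma_mul_Gamma_eq_betaIntegral
    (s := (1/2 : ℂ)) (t := ((sExp n + 1 : ℝ) : ℂ))
    (by norm_num) (by simp; linarith)
  have hbeta : Complex.betaIntegral (1/2) ((sExp n + 1 : ℝ) : ℂ)
      = ((∫ x in (0:ℝ)..1, x ^ (-(1:ℝ)/2) * (1 - x) ^ sExp n : ℝ) : ℂ) := by
    rw [Complex.betaIntegral, ← intervalIntegral.integral_ofReal]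
    apply intervalIntegral.integral_congr
    intro x hx
    rw [uIcc_of_le zero_le_one] at hx
    obtain ⟨h0, h1⟩ := hx
    push_cast
    have e1 : (1/2 - 1 : ℂ) = ((-(1:ℝ)/2 : ℝ) : ℂ) := by norm_num
    have e2 : ((sExp n : ℝ) : ℂ) + 1 - 1 = ((sExp n : ℝ) : ℂ) := by ring
    rw [e1, e2, show ((1:ℂ) - (x:ℂ)) = (((1 - x : ℝ)) : ℂ) by push_cast; ring,
      ← Complex.ofReal_cpow h0, ← Complex.ofReal_cpow (by linarith)]
  rw [hbeta] at hB
  have harg : (1/2 : ℂ) + ((sExp n + 1 : ℝ) : ℂ) = ((sExp n + 3/2 : ℝ) : ℂ) := by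
    push_cast; ring
  rw [harg] at hB
  have hhalf : (1/2 : ℂ) = (((1:ℝ)/2 : ℝ) : ℂ) := by norm_num
  rw [hhalf, Complex.Gamma_ofReal, Complex.Gamma_ofReal, Complex.Gamma_ofReal] at hB
  have hne : Real.Gamma (sExp n + 3/2) ≠ 0 := (Real.Gamma_pos_of_pos (by linarith)).ne'
  have hreal : Real.Gamma (sExp n + 3/2) * (∫ x in (0:ℝ)..1, x ^ (-(1:ℝ)/2) * (1 - x) ^ sExp n)
      = Real.Gamma (1/2) * Real.Gamma (sExp n + 1) := by
    apply Complex.ofReal_injective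
    push_cast at hB ⊢
    exact hB.symm
  rw [eq_div_iff hne]
  linear_combination hreal

lemma bCoef_pos {n : ℕ} (hn : 4 ≤ n) : 0 < bCoef n := by
  have h4 : (4:ℝ) ≤ n := by exact_mod_cast hn
  have g1 : 0 < Real.Gamma (((n:ℝ) - 1)/2) := Real.Gamma_pos_of_pos (by linarith)
  have g2 : 0 < Real.Gamma (((n:ℝ) - 2)/2) := Real.Gamma_pos_of_pos (by linarith)
  have hπ : 0 < Real.sqrt Real.pi := Real.sqrt_pos.mpr Real.pi_pos
  unfold bCoef
  positivity

/-- Normalization: the full integral equals `1`. -/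
lemma normal_int {n : ℕ} (hn : 4 ≤ n) :
    bCoef n / 2 * ∫ u in (-1:ℝ)..1, (1 - u ^ 2) ^ sExp n = 1 := by
  have h4 : (4:ℝ) ≤ n := by exact_mod_cast hn
  rw [symm_int hn, sub_int hn, K_eq hn]
  have e1 : sExp n + 1 = ((n:ℝ) - 2)/2 := by unfold sExp; ring
  have e2 : sExp n + 3/2 = ((n:ℝ) - 1)/2 := by unfold sExp; ring
  rw [e1, e2, Real.Gamma_one_half_eq]
  unfold bCoef
  have g1 : 0 < Real.Gamma (((n:ℝ) - 1)/2) := Real.Gamma_pos_of_pos (by linarith)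
  have g2 : 0 < Real.Gamma (((n:ℝ) - 2)/2) := Real.Gamma_pos_of_pos (by linarith)
  have hπ : 0 < Real.sqrt Real.pi := Real.sqrt_pos.mpr Real.pi_pos
  field_simp

/-- Monotonicity of the primitive on `[0,2]`. -/
lemma Q_mono {n : ℕ} (hn : 4 ≤ n) {a b : ℝ} (h0 : 0 ≤ a) (hab : a ≤ b) (hb : b ≤ 2) :
    (∫ x in (0:ℝ)..a, phiFn n x) ≤ ∫ x in (0:ℝ)..b, phiFn n x := by
  have hi : ∀ c d : ℝ, IntervalIntegrable (phiFn n) volume c d :=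
    fun c d => (phiCont hn).intervalIntegrable c d
  have := intervalIntegral.integral_add_adjacent_intervals (hi 0 a) (hi a b)
  have hpos : 0 ≤ ∫ x in a..b, phiFn n x := by
    apply intervalIntegral.integral_nonneg hab
    intro x ⟨hx1, hx2⟩
    exact phi_nonneg (le_trans h0 hx1) (le_trans hx2 hb)
  linarith

/-- Scaling inequality for the primitive. -/
lemma Q_scale {n : ℕ} (hn : 4 ≤ n) {α r : ℝ} (hα : 1 < α) (hr : 0 < r) (h2 : α * r ≤ 2) :
    (∫ x in (0:ℝ)..(α * r), phiFn n x) ≤ α ^ (n - 2) * ∫ x in (0:ℝ)..r, phiFn n x := by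
  have hα0 : 0 < α := by linarith
  have key := intervalIntegral.integral_comp_smul_deriv (a := 0) (b := r)
    (f := fun t => α * t) (f' := fun _ => α) (g := phiFn n)
    (fun t _ => by simpa using (hasDerivAt_id t).const_mul α)
    continuousOn_const (phiCont hn)
  simp only [Function.comp_apply, mul_zero, smul_eq_mul] at key
  rw [← key]
  have hmono : (∫ t in (0:ℝ)..r, α * phiFn n (α * t))
      ≤ ∫ t in (0:ℝ)..r, α * (α ^ (n - 3) * phiFn n t) := by
    apply intervalIntegral.integral_mono_on hr.le
    · exact (show Continuous fun t : ℝ => α * phiFn n (α * t) from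
        continuous_const.mul ((phiCont hn).comp (by fun_prop))).intervalIntegrable 0 r
    · exact (show Continuous fun t : ℝ => α * (α ^ (n - 3) * phiFn n t) from
        continuous_const.mul (continuous_const.mul (phiCont hn))).intervalIntegrable 0 r
    · intro t ⟨ht0, htr⟩
      have hαt : α * t ≤ 2 := le_trans (by nlinarith) h2
      have ht2 : t ≤ α * t := by nlinarith
      have hb1 : (0:ℝ) ≤ 1 - (α * t) ^ 2 / 4 := by nlinarith
      have hb2 : 1 - (α * t) ^ 2 / 4 ≤ 1 - t ^ 2 / 4 := by nlinarith
      have hrp : (1 - (α * t) ^ 2 / 4) ^ sExp n ≤ (1 - t ^ 2 / 4) ^ sExp n :=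
        Real.rpow_le_rpow hb1 hb2 (sExp_nonneg hn)
      apply mul_le_mul_of_nonneg_left _ hα0.le
      unfold phiFn
      rw [mul_pow, mul_assoc]
      apply mul_le_mul_of_nonneg_left _ (by positivity)
      exact mul_le_mul_of_nonneg_left hrp (pow_nonneg ht0 _)
  calc (∫ t in (0:ℝ)..r, α * phiFn n (α * t)) ≤ _ := hmono
    _ = α ^ (n - 2) * ∫ x in (0:ℝ)..r, phiFn n x := by
        rw [intervalIntegral.integral_const_mul, intervalIntegral.integral_const_mul]
        rw [← mul_assoc, ← pow_succ']
        congr 2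
        omega

/-- `capAreaExt` in terms of the primitive. -/
lemma capAreaExt_eq {n : ℕ} (hn : 4 ≤ n) {r : ℝ} (hr : 0 < r) :
    capAreaExt n r = bCoef n / 2 * ∫ x in (0:ℝ)..(min r 2), phiFn n x := by
  have hs2 : Real.sqrt 2 ≤ 2 := by
    nlinarith [Real.sq_sqrt (by norm_num : (0:ℝ) ≤ 2), Real.sqrt_nonneg 2]
  have hsq2 : Real.sqrt 2 ^ 2 = 2 := Real.sq_sqrt (by norm_num)
  unfold capAreaExt
  split_ifs with h1 h2
  · -- r ≤ √2
    have hr2 : r ≤ 2 := le_trans h1 hs2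
    rw [min_eq_left hr2]
    show bCoef n / 2 * (∫ u in (1 - r ^ 2 / 2)..1, (1 - u ^ 2) ^ sExp n) = _
    rw [capArea_int_eq hn hr.le hr2]
  · -- √2 < r ≤ 2
    push_neg at h1
    rw [min_eq_left h2]
    have hr2sq : 2 ≤ r ^ 2 := by nlinarith [Real.sqrt_nonneg 2]
    have h4r : (0:ℝ) ≤ 4 - r ^ 2 := by nlinarith
    show 1 - bCoef n / 2 *
        (∫ u in (1 - Real.sqrt (4 - r ^ 2) ^ 2 / 2)..1, (1 - u ^ 2) ^ sExp n) = _
    rw [Real.sq_sqrt h4r, show 1 - (4 - r ^ 2) / 2 = r ^ 2 / 2 - 1 by ring]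
    have hi : ∀ a b : ℝ, IntervalIntegrable (fun u : ℝ => (1 - u ^ 2) ^ sExp n) volume a b :=
      fun a b => (gCont hn).intervalIntegrable a b
    have hsplit := intervalIntegral.integral_add_adjacent_intervals
      (hi (-1) (r ^ 2 / 2 - 1)) (hi (r ^ 2 / 2 - 1) 1)
    have hrefl : (∫ u in (1 - r ^ 2 / 2)..1, (1 - u ^ 2) ^ sExp n)
        = ∫ u in (-1:ℝ)..(r ^ 2 / 2 - 1), (1 - u ^ 2) ^ sExp n := by
      have := intervalIntegral.integral_comp_neg (a := 1 - r ^ 2 / 2) (b := 1)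
        (fun u : ℝ => (1 - u ^ 2) ^ sExp n)
      simp only [neg_sq] at this
      rw [this, show -(1 - r ^ 2 / 2) = r ^ 2 / 2 - 1 by ring]
    have hQ : (∫ u in (1 - r ^ 2 / 2)..1, (1 - u ^ 2) ^ sExp n)
        = ∫ x in (0:ℝ)..r, phiFn n x := capArea_int_eq hn hr.le h2
    have hnorm := normal_int hn
    linear_combination (bCoef n / 2) * hQ - (bCoef n / 2) * hsplit
      - (bCoef n / 2) * hrefl - hnorm
  · -- r > 2
    push_neg at h2
    rw [min_eq_right h2.le]
    have := capArea_int_eq hn (by norm_num : (0:ℝ) ≤ 2) le_rfl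
    norm_num at this
    rw [← this]
    have hnorm := normal_int hn
    linarith [hnorm]

/-- Lemma: for `n ≥ 4`, `α > 1` and `r > 0`, `P_n(α r) ≤ α^{n-2} P_n(r)`. -/
theorem stmt_14 (n : ℕ) (hn : 4 ≤ n) (α r : ℝ) (hα : 1 < α) (hr : 0 < r) :
    capAreaExt n (α * r) ≤ α ^ (n - 2) * capAreaExt n r := by
  have hα0 : 0 < α := by linarith
  have hαr : 0 < α * r := by positivity
  have hb : (0:ℝ) ≤ bCoef n / 2 := by linarith [bCoef_pos hn]
  rw [capAreaExt_eq hn hαr, capAreaExt_eq hn hr, mul_left_comm]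
  apply mul_le_mul_of_nonneg_left _ hb
  by_cases h2 : α * r ≤ 2
  · have hr2 : r ≤ 2 := by nlinarith
    rw [min_eq_left h2, min_eq_left hr2]
    exact Q_scale hn hα hr h2
  · push_neg at h2
    rw [min_eq_right h2.le]
    have h2α : 0 < 2 / α := by positivity
    have e : α * (2 / α) = 2 := by field_simp
    have step1 : (∫ x in (0:ℝ)..2, phiFn n x)
        ≤ α ^ (n - 2) * ∫ x in (0:ℝ)..(2 / α), phiFn n x := by
      have := Q_scale hn hα h2α (by rw [e])
      rwa [e] at this
    have step2 : (∫ x in (0:ℝ)..(2 / α), phiFn n x)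
        ≤ ∫ x in (0:ℝ)..(min r 2), phiFn n x := by
      apply Q_mono hn h2α.le _ (min_le_right r 2)
      apply le_min
      · rw [div_le_iff₀ hα0]; nlinarith
      · rw [div_le_iff₀ hα0]; nlinarith
    exact step1.trans (mul_le_mul_of_nonneg_left step2 (by positivity))
end

section
/- Let $n \geq 4$ and $P_n$ be the normalized spherical cap area function with $P_n'(x) = \frac{b_n}{2}x^{n-3}(1-x^2/4)^{(n-4)/2}$ for $0 < x < 2$ and $P_n'(x) = 0$ for $x \geq 2$, $P_n(0) = 0$. Then for $0 \leq \beta < 1 < \alpha$ and $0 < r \leq 2$, $P_n(\alpha r) - P_n(\beta r) \leq (n-2)\, P_n(r)\, \alpha^{n-3} (\alpha - \beta)$. -/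
namespace CapAux

/-- exponent -/
noncomputable def e (n : ℕ) : ℝ := ((n : ℝ) - 4) / 2

/-- density in the radius variable -/
noncomputable def f (n : ℕ) (x : ℝ) : ℝ := x * (1 - (1 - x ^ 2 / 2) ^ 2) ^ (e n)

/-- the cap area as a function of the radius, clipped at 2 -/
noncomputable def F (n : ℕ) (r : ℝ) : ℝ := bCoef n / 2 * ∫ x in (0:ℝ)..(min r 2), f n x

variable {n : ℕ}

lemma e_nonneg (hn : 4 ≤ n) : 0 ≤ e n := by
  have : (4:ℝ) ≤ (n:ℝ) := by exact_mod_cast hn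
  unfold e; linarith

lemma g_cont (hn : 4 ≤ n) : Continuous (fun u : ℝ => (1 - u ^ 2) ^ (e n)) :=
  (Real.continuous_rpow_const (e_nonneg hn)).comp (by continuity)

lemma f_cont (hn : 4 ≤ n) : Continuous (f n) :=
  continuous_id.mul ((Real.continuous_rpow_const (e_nonneg hn)).comp (by continuity))

lemma base_eq (x : ℝ) : 1 - (1 - x ^ 2 / 2) ^ 2 = x ^ 2 * (1 - x ^ 2 / 4) := by ring

lemma f_nonneg (hn : 4 ≤ n) {x : ℝ} (hx : 0 ≤ x) (hx2 : x ≤ 2) : 0 ≤ f n x := by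
  have hb : 0 ≤ 1 - (1 - x ^ 2 / 2) ^ 2 := by nlinarith [sq_nonneg x, mul_nonneg (sq_nonneg x) (show (0:ℝ) ≤ 4 - x ^ 2 by nlinarith)]
  exact mul_nonneg hx (Real.rpow_nonneg hb _)

/-- change of variables -/
lemma subst (hn : 4 ≤ n) (r : ℝ) :
    (∫ u in (1 - r ^ 2 / 2)..1, (1 - u ^ 2) ^ (e n)) = ∫ x in (0:ℝ)..r, f n x := by
  have h := intervalIntegral.integral_comp_smul_deriv
    (f := fun x : ℝ => 1 - x ^ 2 / 2) (f' := fun x : ℝ => -x)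
    (g := fun u : ℝ => (1 - u ^ 2) ^ (e n))
    (a := 0) (b := r)
    (fun x _ => by
      simpa using (((hasDerivAt_pow 2 x).div_const 2).const_sub 1))
    (by fun_prop) (g_cont hn)
  simp only [smul_eq_mul] at h
  rw [show (1 - (0:ℝ) ^ 2 / 2) = 1 by norm_num] at h
  rw [intervalIntegral.integral_symm, ← h, ← intervalIntegral.integral_neg]
  apply intervalIntegral.integral_congr
  intro x _
  simp only [Function.comp, f]
  ring

lemma capArea_eq (hn : 4 ≤ n) (r : ℝ) :
    capArea n r = bCoef n / 2 * ∫ x in (0:ℝ)..r, f n x := by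
  rw [capArea, ← subst hn r]; rfl

/-- total mass integral -/
noncomputable def T (n : ℕ) : ℝ := ∫ u in (-1:ℝ)..1, (1 - u ^ 2) ^ (e n)

lemma reflect (hn : 4 ≤ n) (a : ℝ) :
    (∫ u in (-1:ℝ)..(-a), (1 - u ^ 2) ^ (e n)) = ∫ u in a..1, (1 - u ^ 2) ^ (e n) := by
  have := intervalIntegral.integral_comp_neg (a := a) (b := 1)
    (fun u : ℝ => (1 - u ^ 2) ^ (e n))
  rw [← this]
  apply intervalIntegral.integral_congr
  intro x _
  norm_num

lemma split (hn : 4 ≤ n) (a : ℝ) (ha : -1 ≤ a) (ha' : a ≤ 1) :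
    (∫ u in a..1, (1 - u ^ 2) ^ (e n)) = T n - ∫ u in (-a)..1, (1 - u ^ 2) ^ (e n) := by
  have h1 : (∫ u in (-1:ℝ)..(-a), (1 - u ^ 2) ^ (e n)) = ∫ u in a..1, (1 - u ^ 2) ^ (e n) :=
    reflect hn a
  have h2 : (∫ u in (-1:ℝ)..(-a), (1 - u ^ 2) ^ (e n)) + ∫ u in (-a)..1, (1 - u ^ 2) ^ (e n)
      = T n := by
    apply intervalIntegral.integral_add_adjacent_intervals <;>
      exact ((g_cont hn).intervalIntegrable _ _)
  linarith [h1, h2]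

/-- real beta integral -/
noncomputable def B (n : ℕ) : ℝ := ∫ t in (0:ℝ)..1, t ^ (e n) * (1 - t) ^ (e n)

lemma T_eq (hn : 4 ≤ n) : T n = 2 * (4:ℝ) ^ (e n) * B n := by
  have h := intervalIntegral.integral_comp_mul_add
    (f := fun u : ℝ => (1 - u ^ 2) ^ (e n)) (a := (0:ℝ)) (b := 1)
    (c := (2:ℝ)) (two_ne_zero) (-1)
  norm_num at h
  -- h : ∫ x in 0..1, (1 - (2*x - 1)^2) ^ e n = 2⁻¹ * T n  (roughly)
  have h2 : (∫ x in (0:ℝ)..1, (1 - (2 * x + -1) ^ 2) ^ (e n))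
      = 4 ^ (e n) * B n := by
    rw [B, ← intervalIntegral.integral_const_mul]
    apply intervalIntegral.integral_congr
    intro x hx
    rw [Set.uIcc_of_le (by norm_num : (0:ℝ) ≤ 1)] at hx
    obtain ⟨hx0, hx1⟩ := hx
    show (1 - (2 * x + -1) ^ 2) ^ (e n) = 4 ^ (e n) * (x ^ (e n) * (1 - x) ^ (e n))
    have hb : 1 - (2 * x + -1) ^ 2 = 4 * (x * (1 - x)) := by ring
    rw [hb, Real.mul_rpow (by norm_num) (mul_nonneg hx0 (by linarith)),
      Real.mul_rpow hx0 (by linarith)]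
  rw [T]
  rw [h2] at h
  linarith

lemma beta_eq (hn : 4 ≤ n) :
    Real.Gamma (e n + 1) * Real.Gamma (e n + 1) = Real.Gamma (2 * e n + 2) * B n := by
  have he : (0:ℝ) < e n + 1 := by linarith [e_nonneg hn]
  have hres : (0:ℝ) < ((e n + 1 : ℝ) : ℂ).re := by simpa using he
  have h := Complex.Gamma_mul_Gamma_eq_betaIntegral hres hres
  have hbeta : Complex.betaIntegral ((e n + 1 : ℝ) : ℂ) ((e n + 1 : ℝ) : ℂ) = ((B n : ℝ) : ℂ) := by
    rw [Complex.betaIntegral, B, ← intervalIntegral.integral_ofReal]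
    apply intervalIntegral.integral_congr
    intro x hx
    rw [Set.uIcc_of_le (by norm_num : (0:ℝ) ≤ 1)] at hx
    obtain ⟨hx0, hx1⟩ := hx
    show (x : ℂ) ^ (((e n + 1 : ℝ) : ℂ) - 1) * (1 - (x : ℂ)) ^ (((e n + 1 : ℝ) : ℂ) - 1)
        = ((x ^ (e n) * (1 - x) ^ (e n) : ℝ) : ℂ)
    have h1 : ((e n + 1 : ℝ) : ℂ) - 1 = ((e n : ℝ) : ℂ) := by push_cast; ring
    have h2 : (1 : ℂ) - (x : ℂ) = ((1 - x : ℝ) : ℂ) := by push_cast; ring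
    rw [h1, h2, ← Complex.ofReal_cpow hx0, ← Complex.ofReal_cpow (by linarith)]
    push_cast; ring
  rw [hbeta, ← Complex.ofReal_add, Complex.Gamma_ofReal, Complex.Gamma_ofReal] at h
  have harg : (e n + 1) + (e n + 1) = 2 * e n + 2 := by ring
  rw [harg] at h
  exact_mod_cast h

lemma Gamma_pos_aux (hn : 4 ≤ n) : 0 < Real.Gamma (e n + 1) ∧ 0 < Real.Gamma (2 * e n + 2)
    ∧ 0 < Real.Gamma (e n + 1 + 1 / 2) :=
  ⟨Real.Gamma_pos_of_pos (by linarith [e_nonneg hn]),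
   Real.Gamma_pos_of_pos (by linarith [e_nonneg hn]),
   Real.Gamma_pos_of_pos (by linarith [e_nonneg hn])⟩

lemma norm_eq_one (hn : 4 ≤ n) : bCoef n / 2 * T n = 1 := by
  obtain ⟨hG1, hG2, hG3⟩ := Gamma_pos_aux hn
  have hsqrtpi : (0:ℝ) < Real.sqrt Real.pi := Real.sqrt_pos.mpr Real.pi_pos
  have hdup := Real.Gamma_mul_Gamma_add_half (e n + 1)
  have hbeta := beta_eq hn
  have hTeq := T_eq hn
  have harg1 : ((n : ℝ) - 1) / 2 = e n + 1 + 1 / 2 := by unfold e; ring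
  have harg2 : ((n : ℝ) - 2) / 2 = e n + 1 := by unfold e; ring
  have hdup' : Real.Gamma (2 * (e n + 1)) = Real.Gamma (2 * e n + 2) := by ring_nf
  rw [hdup'] at hdup
  have h4 : (4:ℝ) ^ (e n) = 2 ^ (2 * e n) := by
    have h42 : ((2:ℝ) ^ (2:ℝ)) = 4 := by
      rw [show (2:ℝ) = ((2:ℕ):ℝ) by norm_num]
      rw [Real.rpow_natCast]; norm_num
    rw [← h42, ← Real.rpow_mul (by norm_num : (0:ℝ) ≤ 2)]
  have hpow : 2 * (4:ℝ) ^ (e n) * 2 ^ (1 - 2 * (e n + 1)) = 1 := by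
    have h1 : (2:ℝ) * 2 ^ (2 * e n) * 2 ^ (1 - 2 * (e n + 1))
        = 2 ^ ((1:ℝ)) * 2 ^ (2 * e n) * 2 ^ (1 - 2 * (e n + 1)) := by
      rw [Real.rpow_one]
    rw [h4, h1, ← Real.rpow_add (by norm_num : (0:ℝ) < 2),
      ← Real.rpow_add (by norm_num : (0:ℝ) < 2)]
    rw [show (1:ℝ) + 2 * e n + (1 - 2 * (e n + 1)) = 0 by ring, Real.rpow_zero]
  have hBval : B n = Real.Gamma (e n + 1) * Real.Gamma (e n + 1) / Real.Gamma (2 * e n + 2) := by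
    rw [eq_div_iff hG2.ne']
    linear_combination -hbeta
  have key : (Real.sqrt Real.pi * Real.Gamma (e n + 1)) * (bCoef n / 2 * T n)
      = (Real.sqrt Real.pi * Real.Gamma (e n + 1)) * 1 := by
    rw [bCoef, harg1, harg2, hTeq, hBval]
    have hG1' := hG1.ne'
    have hG2' := hG2.ne'
    have hs' := hsqrtpi.ne'
    have e1 : Real.sqrt Real.pi * Real.Gamma (e n + 1) * (2 * Real.Gamma (e n + 1 + 1 / 2)
        / (Real.sqrt Real.pi * Real.Gamma (e n + 1)) / 2 * (2 * 4 ^ e n * (Real.Gamma (e n + 1)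
        * Real.Gamma (e n + 1) / Real.Gamma (2 * e n + 2))))
        = (Real.Gamma (e n + 1) * Real.Gamma (e n + 1 + 1 / 2)) * (2 * 4 ^ e n)
          * Real.Gamma (e n + 1) / Real.Gamma (2 * e n + 2) := by
      rw [eq_div_iff hG2']
      have hG2'' : Real.Gamma ((e n + 1) * 2) ≠ 0 := by
        rw [show (e n + 1) * 2 = 2 * e n + 2 by ring]; exact hG2'
      field_simp
    rw [e1, hdup]
    rw [div_eq_iff hG2']
    linear_combination (Real.sqrt Real.pi * Real.Gamma (e n + 1) * Real.Gamma (2 * e n + 2)) * hpow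
  exact mul_left_cancel₀ (by positivity) key

lemma sqrt2_le_two : Real.sqrt 2 ≤ 2 := by
  have h : Real.sqrt 4 = 2 := by
    rw [show (4:ℝ) = 2 ^ 2 by norm_num]
    exact Real.sqrt_sq (by norm_num)
  calc Real.sqrt 2 ≤ Real.sqrt 4 := Real.sqrt_le_sqrt (by norm_num)
    _ = 2 := h

lemma capAreaExt_eq (hn : 4 ≤ n) {r : ℝ} (hr : 0 ≤ r) : capAreaExt n r = F n r := by
  unfold capAreaExt
  split_ifs with h1 h2
  · rw [capArea_eq hn, F, min_eq_left (le_trans h1 sqrt2_le_two)]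
  · push_neg at h1
    have h2' : r ≤ 2 := h2
    have hsq : Real.sqrt (4 - r ^ 2) ^ 2 = 4 - r ^ 2 := Real.sq_sqrt (by nlinarith)
    rw [capArea, hsq, show 1 - (4 - r ^ 2) / 2 = -(1 - r ^ 2 / 2) by ring]
    have hs := split hn (1 - r ^ 2 / 2) (by nlinarith) (by nlinarith)
    have hnorm := norm_eq_one hn
    have hsub := subst hn r
    rw [F, min_eq_left h2', ← hsub]
    rw [show ((n:ℝ) - 4) / 2 = e n from rfl]
    linear_combination (-(bCoef n / 2)) * hs - hnorm
  · push_neg at h2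
    rw [F, min_eq_right h2.le]
    have hsub := subst hn 2
    norm_num at hsub
    rw [← hsub]
    have := norm_eq_one hn
    rw [T] at this
    exact this.symm

lemma bCoef_pos (hn : 4 ≤ n) : 0 < bCoef n := by
  have h4 : (4:ℝ) ≤ (n:ℝ) := by exact_mod_cast hn
  have h1 : 0 < Real.Gamma (((n:ℝ) - 1) / 2) := Real.Gamma_pos_of_pos (by linarith)
  have h2 : 0 < Real.Gamma (((n:ℝ) - 2) / 2) := Real.Gamma_pos_of_pos (by linarith)
  have h3 : (0:ℝ) < Real.sqrt Real.pi := Real.sqrt_pos.mpr Real.pi_pos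
  unfold bCoef; positivity

lemma F_nonneg (hn : 4 ≤ n) {r : ℝ} (hr : 0 ≤ r) : 0 ≤ F n r := by
  apply mul_nonneg (by linarith [bCoef_pos hn])
  apply intervalIntegral.integral_nonneg (le_min hr (by norm_num))
  exact fun x hx => f_nonneg hn hx.1 (hx.2.trans (min_le_right r 2))

lemma cast_sub4 (hn : 4 ≤ n) : ((n - 4 : ℕ) : ℝ) = (n : ℝ) - 4 := by
  rw [Nat.cast_sub hn]; norm_num

lemma f_comp_le (hn : 4 ≤ n) {c u : ℝ} (hc : 1 ≤ c) (hu : 0 ≤ u) (hcu : c * u ≤ 2) :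
    f n (c * u) ≤ c ^ (n - 3) * f n u := by
  have hc0 : (0:ℝ) ≤ c := by linarith
  have hu2 : u ≤ 2 := by nlinarith
  unfold f
  rw [base_eq, base_eq]
  have hcu0 : (0:ℝ) ≤ c * u := mul_nonneg hc0 hu
  have hcu4 : (c * u) ^ 2 ≤ 4 := by nlinarith
  have hA0 : 0 ≤ u ^ 2 * (1 - (c * u) ^ 2 / 4) :=
    mul_nonneg (sq_nonneg u) (by linarith)
  rw [show (c * u) ^ 2 * (1 - (c * u) ^ 2 / 4) = c ^ 2 * (u ^ 2 * (1 - (c * u) ^ 2 / 4)) by ring,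
    Real.mul_rpow (sq_nonneg c) hA0]
  have hc2 : ((c ^ 2 : ℝ)) ^ (e n) = c ^ (n - 4 : ℕ) := by
    rw [← Real.rpow_natCast c 2, ← Real.rpow_mul hc0, ← Real.rpow_natCast c (n - 4)]
    congr 1
    rw [cast_sub4 hn]; unfold e; ring
  rw [hc2]
  have hsq : u ^ 2 ≤ (c * u) ^ 2 := by
    nlinarith [mul_nonneg (mul_nonneg (sub_nonneg.mpr hc)
      (show (0:ℝ) ≤ c + 1 by linarith)) (sq_nonneg u)]
  have hmono : (u ^ 2 * (1 - (c * u) ^ 2 / 4)) ^ (e n) ≤ (u ^ 2 * (1 - u ^ 2 / 4)) ^ (e n) :=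
    Real.rpow_le_rpow hA0
      (by nlinarith [mul_nonneg (sq_nonneg u) (sub_nonneg.mpr hsq)]) (e_nonneg hn)
  calc c * u * (c ^ (n - 4) * (u ^ 2 * (1 - (c * u) ^ 2 / 4)) ^ e n)
      = c ^ (n - 3) * (u * (u ^ 2 * (1 - (c * u) ^ 2 / 4)) ^ e n) := by
        rw [show n - 3 = (n - 4) + 1 by omega, pow_succ]; ring
    _ ≤ c ^ (n - 3) * (u * (u ^ 2 * (1 - u ^ 2 / 4)) ^ e n) := by
        apply mul_le_mul_of_nonneg_left _ (by positivity)
        exact mul_le_mul_of_nonneg_left hmono hu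

lemma f_comp_ge (hn : 4 ≤ n) {c u : ℝ} (hc0 : 0 ≤ c) (hc : c ≤ 1) (hu : 0 ≤ u) (hu2 : u ≤ 2) :
    c ^ (n - 3) * f n u ≤ f n (c * u) := by
  have hcu : c * u ≤ 2 := by nlinarith
  have hcu0 : (0:ℝ) ≤ c * u := mul_nonneg hc0 hu
  have hcu4 : (c * u) ^ 2 ≤ 4 := by nlinarith
  have hu4 : u ^ 2 ≤ 4 := by nlinarith
  unfold f
  rw [base_eq, base_eq]
  have hB0 : 0 ≤ u ^ 2 * (1 - u ^ 2 / 4) := mul_nonneg (sq_nonneg u) (by linarith)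
  rw [show (c * u) ^ 2 * (1 - (c * u) ^ 2 / 4) = c ^ 2 * (u ^ 2 * (1 - (c * u) ^ 2 / 4)) by ring,
    Real.mul_rpow (sq_nonneg c) (mul_nonneg (sq_nonneg u) (by linarith))]
  have hc2 : ((c ^ 2 : ℝ)) ^ (e n) = c ^ (n - 4 : ℕ) := by
    rw [← Real.rpow_natCast c 2, ← Real.rpow_mul hc0, ← Real.rpow_natCast c (n - 4)]
    congr 1
    rw [cast_sub4 hn]; unfold e; ring
  rw [hc2]
  have hsq : (c * u) ^ 2 ≤ u ^ 2 := by
    nlinarith [mul_nonneg (mul_nonneg (sub_nonneg.mpr hc)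
      (show (0:ℝ) ≤ c + 1 by linarith)) (sq_nonneg u)]
  have hmono : (u ^ 2 * (1 - u ^ 2 / 4)) ^ (e n) ≤ (u ^ 2 * (1 - (c * u) ^ 2 / 4)) ^ (e n) :=
    Real.rpow_le_rpow hB0
      (by nlinarith [mul_nonneg (sq_nonneg u) (sub_nonneg.mpr hsq)]) (e_nonneg hn)
  calc c ^ (n - 3) * (u * (u ^ 2 * (1 - u ^ 2 / 4)) ^ e n)
      = c * u * (c ^ (n - 4) * (u ^ 2 * (1 - u ^ 2 / 4)) ^ e n) := by
        rw [show n - 3 = (n - 4) + 1 by omega, pow_succ]; ring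
    _ ≤ c * u * (c ^ (n - 4) * (u ^ 2 * (1 - (c * u) ^ 2 / 4)) ^ e n) := by
        apply mul_le_mul_of_nonneg_left _ (mul_nonneg hc0 hu)
        exact mul_le_mul_of_nonneg_left hmono (pow_nonneg hc0 _)

lemma integral_scale {c b : ℝ} (hc : c ≠ 0) :
    ∫ x in (0:ℝ)..(c * b), f n x = c * ∫ u in (0:ℝ)..b, f n (c * u) := by
  rw [intervalIntegral.integral_comp_mul_left (f n) hc]
  rw [mul_zero, smul_eq_mul, ← mul_assoc, mul_inv_cancel₀ hc, one_mul]

lemma F_scale_le (hn : 4 ≤ n) {c r : ℝ} (hc : 1 ≤ c) (hr0 : 0 ≤ r) (hr2 : r ≤ 2) :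
    F n (c * r) ≤ c ^ (n - 2) * F n r := by
  have hc0 : (0:ℝ) < c := lt_of_lt_of_le one_pos hc
  have hb : (0:ℝ) ≤ bCoef n / 2 := by linarith [bCoef_pos hn]
  set m := min (c * r) 2 with hm
  have hm0 : 0 ≤ m := le_min (by positivity) (by norm_num)
  have hm2 : m ≤ 2 := min_le_right _ _
  have hmc : m / c ≤ r := by
    rw [div_le_iff₀ hc0]
    exact (min_le_left _ _).trans_eq (mul_comm c r)
  have hmc0 : 0 ≤ m / c := by positivity
  have hmeq : c * (m / c) = m := by field_simp
  have hsub : ∫ x in (0:ℝ)..m, f n x = c * ∫ u in (0:ℝ)..(m / c), f n (c * u) := by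
    rw [← integral_scale hc0.ne', hmeq]
  have hpt : (∫ u in (0:ℝ)..(m / c), f n (c * u))
      ≤ ∫ u in (0:ℝ)..(m / c), c ^ (n - 3) * f n u := by
    apply intervalIntegral.integral_mono_on hmc0
    · exact ((f_cont hn).comp (continuous_const.mul continuous_id)).intervalIntegrable _ _
    · exact (continuous_const.mul (f_cont hn)).intervalIntegrable _ _
    · intro x hx
      exact f_comp_le hn hc hx.1 (by
        calc c * x ≤ c * (m / c) := by
              exact mul_le_mul_of_nonneg_left hx.2 hc0.le
          _ = m := hmeq
          _ ≤ 2 := hm2)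
  rw [intervalIntegral.integral_const_mul] at hpt
  have hext : (∫ u in (0:ℝ)..(m / c), f n u) ≤ ∫ u in (0:ℝ)..r, f n u := by
    have hadd : (∫ u in (0:ℝ)..(m / c), f n u) + ∫ u in (m / c)..r, f n u
        = ∫ u in (0:ℝ)..r, f n u := by
      apply intervalIntegral.integral_add_adjacent_intervals <;>
        exact ((f_cont hn).intervalIntegrable _ _)
    have hpos : 0 ≤ ∫ u in (m / c)..r, f n u :=
      intervalIntegral.integral_nonneg hmc
        (fun x hx => f_nonneg hn (hmc0.trans hx.1) (hx.2.trans hr2))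
    linarith
  have hI0 : 0 ≤ ∫ u in (0:ℝ)..(m / c), f n u :=
    intervalIntegral.integral_nonneg hmc0
      (fun x hx => f_nonneg hn hx.1 ((hx.2.trans hmc).trans hr2))
  have hcpow : (0:ℝ) ≤ c ^ (n - 3) := by positivity
  have hpow : c * c ^ (n - 3) = c ^ (n - 2) := by
    rw [show n - 2 = (n - 3) + 1 by omega, pow_succ]; ring
  rw [F, F, ← hm, min_eq_left hr2, hsub]
  calc bCoef n / 2 * (c * ∫ u in (0:ℝ)..(m / c), f n (c * u))
      ≤ bCoef n / 2 * (c * (c ^ (n - 3) * ∫ u in (0:ℝ)..(m / c), f n u)) := by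
        apply mul_le_mul_of_nonneg_left _ hb
        exact mul_le_mul_of_nonneg_left hpt hc0.le
    _ ≤ bCoef n / 2 * (c * (c ^ (n - 3) * ∫ u in (0:ℝ)..r, f n u)) := by
        apply mul_le_mul_of_nonneg_left _ hb
        apply mul_le_mul_of_nonneg_left _ hc0.le
        exact mul_le_mul_of_nonneg_left hext hcpow
    _ = c ^ (n - 2) * (bCoef n / 2 * ∫ u in (0:ℝ)..r, f n u) := by
        rw [← hpow]; ring

lemma F_scale_ge (hn : 4 ≤ n) {c r : ℝ} (hc0 : 0 ≤ c) (hc : c ≤ 1) (hr0 : 0 ≤ r)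
    (hr2 : r ≤ 2) : c ^ (n - 2) * F n r ≤ F n (c * r) := by
  have hb : (0:ℝ) ≤ bCoef n / 2 := by linarith [bCoef_pos hn]
  rcases eq_or_lt_of_le hc0 with rfl | hc0'
  · rw [zero_pow (by omega : n - 2 ≠ 0), zero_mul, zero_mul]
    exact F_nonneg hn le_rfl
  · have hcr2 : c * r ≤ 2 := by nlinarith
    have hsub : ∫ x in (0:ℝ)..(c * r), f n x = c * ∫ u in (0:ℝ)..r, f n (c * u) :=
      integral_scale hc0'.ne'
    have hpt : (∫ u in (0:ℝ)..r, c ^ (n - 3) * f n u)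
        ≤ ∫ u in (0:ℝ)..r, f n (c * u) := by
      apply intervalIntegral.integral_mono_on hr0
      · exact (continuous_const.mul (f_cont hn)).intervalIntegrable _ _
      · exact ((f_cont hn).comp (continuous_const.mul continuous_id)).intervalIntegrable _ _
      · intro x hx
        exact f_comp_ge hn hc0 hc hx.1 (hx.2.trans hr2)
    rw [intervalIntegral.integral_const_mul] at hpt
    have hpow : c * c ^ (n - 3) = c ^ (n - 2) := by
      rw [show n - 2 = (n - 3) + 1 by omega, pow_succ]; ring
    rw [F, F, min_eq_left hr2, min_eq_left hcr2, hsub]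
    calc c ^ (n - 2) * (bCoef n / 2 * ∫ u in (0:ℝ)..r, f n u)
        = bCoef n / 2 * (c * (c ^ (n - 3) * ∫ u in (0:ℝ)..r, f n u)) := by
          rw [← hpow]; ring
      _ ≤ bCoef n / 2 * (c * ∫ u in (0:ℝ)..r, f n (c * u)) := by
          apply mul_le_mul_of_nonneg_left _ hb
          exact mul_le_mul_of_nonneg_left hpt hc0'.le

lemma pow_diff_le {x y : ℝ} (hy : 0 ≤ y) (hxy : y ≤ x) {m : ℕ} (hm : 1 ≤ m) :
    x ^ m - y ^ m ≤ (m : ℝ) * x ^ (m - 1) * (x - y) := by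
  have hx : 0 ≤ x := hy.trans hxy
  have hgeom := geom_sum₂_mul (R := ℝ) (x := x) (y := y) (n := m)
  rw [← hgeom]
  have hsum : (∑ i ∈ Finset.range m, x ^ i * y ^ (m - 1 - i)) ≤ (m : ℝ) * x ^ (m - 1) := by
    calc (∑ i ∈ Finset.range m, x ^ i * y ^ (m - 1 - i))
        ≤ ∑ _i ∈ Finset.range m, x ^ (m - 1) := by
          apply Finset.sum_le_sum
          intro i hi
          have hi' : i < m := Finset.mem_range.mp hi
          calc x ^ i * y ^ (m - 1 - i) ≤ x ^ i * x ^ (m - 1 - i) := by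
                apply mul_le_mul_of_nonneg_left _ (pow_nonneg hx i)
                exact pow_le_pow_left₀ hy hxy _
            _ = x ^ (m - 1) := by rw [← pow_add]; congr 1; omega
      _ = (m : ℝ) * x ^ (m - 1) := by
          rw [Finset.sum_const, Finset.card_range, nsmul_eq_mul]
  have hxy' : 0 ≤ x - y := sub_nonneg.mpr hxy
  exact mul_le_mul_of_nonneg_right hsum hxy'

end CapAux

/-- Lemma: for `n ≥ 4`, `0 ≤ β < 1 < α` and `0 < r ≤ 2`,
`P_n(α r) - P_n(β r) ≤ (n-2) P_n(r) α^{n-3} (α - β)`. -/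
theorem stmt_15 (n : ℕ) (hn : 4 ≤ n) (α β r : ℝ) (hβ0 : 0 ≤ β) (hβ1 : β < 1) (hα : 1 < α)
    (hr : 0 < r) (hr2 : r ≤ 2) :
    capAreaExt n (α * r) - capAreaExt n (β * r) ≤
      ((n : ℝ) - 2) * capAreaExt n r * α ^ (n - 3) * (α - β) := by
  open CapAux in
  have hα0 : (0:ℝ) < α := lt_trans one_pos hα
  have h1 : capAreaExt n (α * r) = F n (α * r) := capAreaExt_eq hn (by positivity)
  have h2 : capAreaExt n (β * r) = F n (β * r) :=
    capAreaExt_eq hn (mul_nonneg hβ0 hr.le)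
  have h3 : capAreaExt n r = F n r := capAreaExt_eq hn hr.le
  have hF : 0 ≤ F n r := F_nonneg hn hr.le
  have hsle : F n (α * r) ≤ α ^ (n - 2) * F n r := F_scale_le hn hα.le hr.le hr2
  have hsge : β ^ (n - 2) * F n r ≤ F n (β * r) :=
    F_scale_ge hn hβ0 hβ1.le hr.le hr2
  have hpoly : α ^ (n - 2) - β ^ (n - 2)
      ≤ ((n - 2 : ℕ) : ℝ) * α ^ (n - 2 - 1) * (α - β) :=
    pow_diff_le hβ0 (le_trans hβ1.le hα.le) (by omega)
  rw [show n - 2 - 1 = n - 3 by omega] at hpoly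
  have hcast : ((n - 2 : ℕ) : ℝ) = (n : ℝ) - 2 := by
    rw [Nat.cast_sub (by omega : 2 ≤ n)]; norm_num
  rw [hcast] at hpoly
  calc capAreaExt n (α * r) - capAreaExt n (β * r)
      = F n (α * r) - F n (β * r) := by rw [h1, h2]
    _ ≤ α ^ (n - 2) * F n r - β ^ (n - 2) * F n r := by linarith
    _ = (α ^ (n - 2) - β ^ (n - 2)) * F n r := by ring
    _ ≤ (((n : ℝ) - 2) * α ^ (n - 3) * (α - β)) * F n r :=
        mul_le_mul_of_nonneg_right hpoly hF
    _ = ((n : ℝ) - 2) * capAreaExt n r * α ^ (n - 3) * (α - β) := by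
        rw [h3]; ring
end

section
/- Let $n \geq 3$, $0 < r < \sqrt{2}$, and let $w_1, w_2$ be points on the unit sphere $S^{n-2} \subset \mathbb{R}^{n-1}$ with $\|w_1 - w_2\|_2 = d$ satisfying $2 - 2\sqrt{1 - (d/2)^2} < r^2$. If $u$ is uniformly distributed on $S^{n-2}$, then $P\big(u \in \operatorname{SC}(r, w_1) \cap \operatorname{SC}(r, w_2)\big) \leq P_n(h(r,d))$ where $h(r,d) = \sqrt{2 - \frac{2 - r^2}{\sqrt{1 - (d/2)^2}}}$. -/
open MeasureTheory

set_option maxHeartbeats 800000 in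
/-- Lemma: let `μ` be the uniform (rotation-invariant) probability measure on the unit
sphere `S^{n-2} ⊆ ℝ^{n-1}` (`n ≥ 3`). If `w₁, w₂ ∈ S^{n-2}` with `‖w₁ - w₂‖ = d`,
`0 < r < √2` and `2 - 2√(1 - (d/2)²) < r²`, then the measure of the intersection of the
two spherical caps of radius `r` centered at `w₁` and `w₂` is at most the measure
`P_n(h(r,d))` of a cap of radius `h(r,d) = √(2 - (2 - r²)/√(1 - (d/2)²))` (centered at any
point `w₀` of the sphere). -/
theorem stmt_16 (n : ℕ) (hn : 3 ≤ n)
    (μ : Measure (EuclideanSpace ℝ (Fin (n - 1)))) [IsProbabilityMeasure μ]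
    (hinv : ∀ T : EuclideanSpace ℝ (Fin (n - 1)) ≃ₗᵢ[ℝ] EuclideanSpace ℝ (Fin (n - 1)),
      μ.map T = μ)
    (hsupp : μ (Metric.sphere (0 : EuclideanSpace ℝ (Fin (n - 1))) 1) = 1)
    (w₁ w₂ : EuclideanSpace ℝ (Fin (n - 1))) (hw₁ : ‖w₁‖ = 1) (hw₂ : ‖w₂‖ = 1)
    (r d : ℝ) (hr0 : 0 < r) (hr : r < Real.sqrt 2) (hd : d = ‖w₁ - w₂‖)
    (hcond : 2 - 2 * Real.sqrt (1 - (d / 2) ^ 2) < r ^ 2)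
    (w₀ : EuclideanSpace ℝ (Fin (n - 1))) (hw₀ : ‖w₀‖ = 1) :
    μ ({x | ‖x - w₁‖ ≤ r} ∩ {x | ‖x - w₂‖ ≤ r}) ≤
      μ {x | ‖x - w₀‖ ≤ Real.sqrt (2 - (2 - r ^ 2) / Real.sqrt (1 - (d / 2) ^ 2))} := by
  classical
  have hr2 : r ^ 2 < 2 := by
    nlinarith [Real.sq_sqrt (by norm_num : (0:ℝ) ≤ 2), Real.sqrt_nonneg 2, hr0]
  set q : ℝ := Real.sqrt (1 - (d / 2) ^ 2) with hq
  have hs0 : 0 < q := by linarith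
  have hnn : 0 ≤ 1 - (d / 2) ^ 2 := by
    by_contra hneg
    push_neg at hneg
    rw [hq, Real.sqrt_eq_zero_of_nonpos hneg.le] at hs0
    exact lt_irrefl 0 hs0
  have hq2 : q ^ 2 = 1 - (d / 2) ^ 2 := Real.sq_sqrt hnn
  set s : ℝ := ‖w₁ + w₂‖ with hs
  have hinner : (2:ℝ) - 2 * inner ℝ w₁ w₂ = d ^ 2 := by
    have := norm_sub_sq_real w₁ w₂
    rw [hw₁, hw₂] at this
    rw [hd]; nlinarith [this]
  have hs2 : s ^ 2 = 4 - d ^ 2 := by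
    have := norm_add_sq_real w₁ w₂
    rw [hw₁, hw₂] at this
    nlinarith [this]
  have hsq : s = 2 * q := by
    have hz : (s - 2 * q) * (s + 2 * q) = 0 := by nlinarith [hs2, hq2]
    rcases mul_eq_zero.mp hz with hz | hz
    · linarith
    · have : (0:ℝ) ≤ s := norm_nonneg _
      linarith
  have hspos : 0 < s := by rw [hsq]; linarith
  set m : EuclideanSpace ℝ (Fin (n - 1)) := s⁻¹ • (w₁ + w₂) with hm
  have hmnorm : ‖m‖ = 1 := by
    rw [hm, norm_smul, norm_inv, Real.norm_eq_abs, abs_of_pos hspos, ← hs,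
      inv_mul_cancel₀ hspos.ne']
  set h : ℝ := Real.sqrt (2 - (2 - r ^ 2) / q) with hh
  have hsub : Metric.sphere (0 : EuclideanSpace ℝ (Fin (n - 1))) 1 ∩
      ({x | ‖x - w₁‖ ≤ r} ∩ {x | ‖x - w₂‖ ≤ r}) ⊆ {x | ‖x - m‖ ≤ h} := by
    rintro x ⟨hx, hx1, hx2⟩
    have hxn : ‖x‖ = 1 := by simpa using hx
    have e1 : ‖x - w₁‖ ^ 2 = 2 - 2 * inner ℝ x w₁ := by
      have := norm_sub_sq_real x w₁; rw [hxn, hw₁] at this; nlinarith [this]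
    have e2 : ‖x - w₂‖ ^ 2 = 2 - 2 * inner ℝ x w₂ := by
      have := norm_sub_sq_real x w₂; rw [hxn, hw₂] at this; nlinarith [this]
    have i1 : (2:ℝ) - 2 * inner ℝ x w₁ ≤ r ^ 2 := by
      rw [← e1]; exact pow_le_pow_left₀ (norm_nonneg _) hx1 2
    have i2 : (2:ℝ) - 2 * inner ℝ x w₂ ≤ r ^ 2 := by
      rw [← e2]; exact pow_le_pow_left₀ (norm_nonneg _) hx2 2
    have isum : (2:ℝ) - r ^ 2 ≤ inner ℝ x (w₁ + w₂) := by
      rw [inner_add_right]; linarith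
    have him : (inner ℝ x m : ℝ) = s⁻¹ * inner ℝ x (w₁ + w₂) := by
      rw [hm, real_inner_smul_right]
    have em : ‖x - m‖ ^ 2 = 2 - 2 * inner ℝ x m := by
      have := norm_sub_sq_real x m; rw [hxn, hmnorm] at this; nlinarith [this]
    have key : ‖x - m‖ ^ 2 ≤ 2 - (2 - r ^ 2) / q := by
      rw [em, him]
      have h1 : (2 - r ^ 2) / s ≤ s⁻¹ * inner ℝ x (w₁ + w₂) := by
        rw [div_eq_mul_inv, mul_comm]
        exact mul_le_mul_of_nonneg_left isum (inv_nonneg.mpr hspos.le)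
      have hdiv : (2 - r ^ 2) / q = 2 * ((2 - r ^ 2) / s) := by
        rw [hsq]; field_simp
      linarith
    show ‖x - m‖ ≤ h
    calc ‖x - m‖ = Real.sqrt (‖x - m‖ ^ 2) := by
          rw [Real.sqrt_sq (norm_nonneg _)]
      _ ≤ h := Real.sqrt_le_sqrt key
  have hcompl : μ (Metric.sphere (0 : EuclideanSpace ℝ (Fin (n - 1))) 1)ᶜ = 0 := by
    rw [measure_compl Metric.isClosed_sphere.measurableSet (measure_ne_top μ _),
      hsupp, measure_univ, tsub_self]
  have step1 : μ ({x | ‖x - w₁‖ ≤ r} ∩ {x | ‖x - w₂‖ ≤ r}) ≤ μ {x | ‖x - m‖ ≤ h} := by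
    calc μ ({x | ‖x - w₁‖ ≤ r} ∩ {x | ‖x - w₂‖ ≤ r})
        ≤ μ ({x | ‖x - m‖ ≤ h} ∪ (Metric.sphere (0 : EuclideanSpace ℝ (Fin (n - 1))) 1)ᶜ) := by
          apply measure_mono
          intro x hx
          by_cases hxs : x ∈ Metric.sphere (0 : EuclideanSpace ℝ (Fin (n - 1))) 1
          · exact Or.inl (hsub ⟨hxs, hx⟩)
          · exact Or.inr hxs
      _ ≤ μ {x | ‖x - m‖ ≤ h} + μ (Metric.sphere (0 : EuclideanSpace ℝ (Fin (n - 1))) 1)ᶜ :=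
          measure_union_le _ _
      _ = μ {x | ‖x - m‖ ≤ h} := by rw [hcompl, add_zero]
  set T := Submodule.reflection (ℝ ∙ (w₀ - m))ᗮ with hT
  have hTw₀ : T w₀ = m := Submodule.reflection_sub (by rw [hw₀, hmnorm])
  have hmeas : MeasurableSet {x : EuclideanSpace ℝ (Fin (n - 1)) | ‖x - m‖ ≤ h} := by
    have hcl : IsClosed {x : EuclideanSpace ℝ (Fin (n - 1)) | ‖x - m‖ ≤ h} := by
      have heq : {x : EuclideanSpace ℝ (Fin (n - 1)) | ‖x - m‖ ≤ h} = Metric.closedBall m h := by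
        ext x; simp [Metric.mem_closedBall, dist_eq_norm]
      rw [heq]; exact Metric.isClosed_closedBall
    exact hcl.measurableSet
  have hpre : (T : EuclideanSpace ℝ (Fin (n - 1)) → EuclideanSpace ℝ (Fin (n - 1))) ⁻¹'
      {x | ‖x - m‖ ≤ h} = {x | ‖x - w₀‖ ≤ h} := by
    ext x
    simp only [Set.mem_preimage, Set.mem_setOf_eq]
    rw [← hTw₀, ← map_sub, T.norm_map]
  have heq : μ {x | ‖x - m‖ ≤ h} = μ {x | ‖x - w₀‖ ≤ h} := by
    conv_lhs => rw [← hinv T]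
    rw [Measure.map_apply T.continuous.measurable hmeas, hpre]
  rw [heq] at step1
  exact step1
end

section
/- Let $n \geq 4$, $\delta \geq 2$, and let $\tilde u_1, \dots, \tilde u_\delta$ be i.i.d. uniform random points in the unit ball $B^{n-2} \subset \mathbb{R}^{n-2}$. Then the probability that some vertex of the geometric graph on $\{\tilde u_i\}$ with connection radius $1$ is adjacent to all other vertices is at most $\delta(n-2)\int_0^1 \left(1 - \frac{r^2}{4}\right)^{(n-2)(\delta-1)/2} r^{n-3}\, dr$. -/
open MeasureTheory ProbabilityTheory Metric Set

private lemma aux19_ball (d : ℕ) (hd : 0 < d) (x : EuclideanSpace ℝ (Fin d)) (hx : ‖x‖ ≤ 1) :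
    (cond volume (closedBall (0 : EuclideanSpace ℝ (Fin d)) 1)) (closedBall x 1)
      ≤ ENNReal.ofReal ((1 - ‖x‖^2/4) ^ ((d:ℝ)/2)) := by
  haveI : Nontrivial (EuclideanSpace ℝ (Fin d)) := by
    apply Module.nontrivial_of_finrank_pos (R := ℝ)
    rw [finrank_euclideanSpace_fin]; exact hd
  set B := closedBall (0 : EuclideanSpace ℝ (Fin d)) 1 with hB
  have hvolB_pos : 0 < volume B := (measure_ball_pos volume 0 one_pos).trans_le
    (measure_mono ball_subset_closedBall)
  have hvolB_lt : volume B < ⊤ := measure_closedBall_lt_top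
  have hx2 : ‖x‖^2 ≤ 1 := by nlinarith [norm_nonneg x]
  set a : ℝ := 1 - ‖x‖^2/4 with ha
  have ha0 : 0 ≤ a := by rw [ha]; linarith
  have key : B ∩ closedBall x 1 ⊆ closedBall ((2:ℝ)⁻¹ • x) (Real.sqrt a) := by
    rintro y ⟨hy1, hy2⟩
    rw [mem_closedBall, dist_eq_norm]
    rw [mem_closedBall, dist_eq_norm] at hy2
    rw [hB, mem_closedBall_zero_iff] at hy1
    have hsq : ‖y - (2:ℝ)⁻¹ • x‖^2 ≤ a := by
      have h := parallelogram_law_with_norm ℝ (y - (2:ℝ)⁻¹ • x) ((2:ℝ)⁻¹ • x)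
      have e1 : y - (2:ℝ)⁻¹ • x + (2:ℝ)⁻¹ • x = y := by module
      have e2 : y - (2:ℝ)⁻¹ • x - (2:ℝ)⁻¹ • x = y - x := by module
      rw [e1, e2] at h
      have h3 : ‖(2:ℝ)⁻¹ • x‖ = ‖x‖/2 := by
        rw [norm_smul]; simp [Real.norm_eq_abs]; ring
      rw [h3] at h
      nlinarith [sq_nonneg ‖x‖, norm_nonneg y, norm_nonneg (y - x)]
    calc ‖y - (2:ℝ)⁻¹ • x‖ = Real.sqrt (‖y - (2:ℝ)⁻¹ • x‖^2) := by
          rw [Real.sqrt_sq (norm_nonneg _)]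
      _ ≤ Real.sqrt a := Real.sqrt_le_sqrt hsq
  rw [cond_apply measurableSet_closedBall]
  have hb : volume (B ∩ closedBall x 1) ≤ ENNReal.ofReal ((Real.sqrt a)^d) * volume B := by
    calc volume (B ∩ closedBall x 1) ≤ volume (closedBall ((2:ℝ)⁻¹ • x) (Real.sqrt a)) :=
          measure_mono key
      _ = ENNReal.ofReal ((Real.sqrt a)^(Module.finrank ℝ (EuclideanSpace ℝ (Fin d)))) * volume B :=
          Measure.addHaar_closedBall' volume _ (Real.sqrt_nonneg a)
      _ = ENNReal.ofReal ((Real.sqrt a)^d) * volume B := by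
          rw [finrank_euclideanSpace_fin]
  calc (volume B)⁻¹ * volume (B ∩ closedBall x 1)
      ≤ (volume B)⁻¹ * (ENNReal.ofReal ((Real.sqrt a)^d) * volume B) :=
        mul_le_mul_right hb _
    _ = ENNReal.ofReal ((Real.sqrt a)^d) := by
        rw [← mul_assoc, mul_comm (volume B)⁻¹, mul_assoc,
          ENNReal.inv_mul_cancel hvolB_pos.ne' hvolB_lt.ne, mul_one]
    _ = ENNReal.ofReal (a ^ ((d:ℝ)/2)) := by
        congr 1
        rw [Real.sqrt_eq_rpow, ← Real.rpow_natCast (a ^ ((1:ℝ)/2)) d, ← Real.rpow_mul ha0]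
        ring_nf

private lemma aux19_fub (d m : ℕ) (ν : Measure (EuclideanSpace ℝ (Fin d)))
    [IsProbabilityMeasure ν] (i : Fin (m+1)) :
    (Measure.pi (fun _ : Fin (m+1) => ν))
      {u | ∀ j, j ≠ i → dist (u i) (u j) ≤ 1}
      = ∫⁻ x, (ν (closedBall x 1))^m ∂ν := by
  set E := EuclideanSpace ℝ (Fin d) with hE
  set S : Set (E × (Fin m → E)) := {q | ∀ j, q.2 j ∈ closedBall q.1 1} with hS
  have hSm : MeasurableSet S := by
    have : S = ⋂ j, {q : E × (Fin m → E) | dist (q.2 j) q.1 ≤ 1} := by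
      ext q; simp [hS, mem_closedBall]
    rw [this]
    exact MeasurableSet.iInter fun j => measurableSet_le (by fun_prop) measurable_const
  have hpre : {u : Fin (m+1) → E | ∀ j, j ≠ i → dist (u i) (u j) ≤ 1}
      = (MeasurableEquiv.piFinSuccAbove (fun _ => E) i) ⁻¹' S := by
    ext u
    simp only [mem_setOf_eq, mem_preimage, hS, MeasurableEquiv.piFinSuccAbove_apply,
      mem_closedBall]
    constructor
    · intro h j
      rw [dist_comm]
      exact h _ (Fin.succAbove_ne i j)
    · intro h j hj
      obtain ⟨k, rfl⟩ := Fin.exists_succAbove_eq hj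
      rw [dist_comm]
      exact h k
  rw [hpre,
    (measurePreserving_piFinSuccAbove (fun _ : Fin (m+1) => ν) i).measure_preimage
      hSm.nullMeasurableSet,
    Measure.prod_apply hSm]
  congr 1
  ext x
  have : Prod.mk x ⁻¹' S = Set.pi univ (fun _ : Fin m => closedBall x 1) := by
    ext v; simp [hS, Set.mem_pi]
  rw [this, Measure.pi_pi]
  simp

private lemma aux19_rad (d : ℕ) (hd : 0 < d) (p : ℝ) :
    ∫ x, (1 - ‖x‖^2/4) ^ p
        ∂(cond volume (closedBall (0 : EuclideanSpace ℝ (Fin d)) 1))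
      = (d:ℝ) * ∫ r in (0:ℝ)..1, (1 - r^2/4) ^ p * r^(d-1) := by
  haveI : Nontrivial (EuclideanSpace ℝ (Fin d)) := by
    apply Module.nontrivial_of_finrank_pos (R := ℝ)
    rw [finrank_euclideanSpace_fin]; exact hd
  set B := closedBall (0 : EuclideanSpace ℝ (Fin d)) 1 with hB
  have hvol_pos : 0 < volume B := (measure_ball_pos volume 0 one_pos).trans_le
    (measure_mono ball_subset_closedBall)
  have hvol_lt : volume B < ⊤ := measure_closedBall_lt_top
  set f : ℝ → ℝ := fun r => (1 - r^2/4) ^ p with hf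
  set g : ℝ → ℝ := Set.indicator (Iic 1) f with hg
  have hcond : cond volume B = (volume B)⁻¹ • volume.restrict B := rfl
  have h1 : ∫ x in B, f ‖x‖ = ∫ x : EuclideanSpace ℝ (Fin d), g ‖x‖ := by
    rw [← integral_indicator (measurableSet_closedBall)]
    congr 1
    ext x
    by_cases hx : x ∈ B
    · rw [Set.indicator_of_mem hx, hg,
        Set.indicator_of_mem (by rwa [hB, mem_closedBall_zero_iff] at hx)]
    · rw [Set.indicator_of_notMem hx, hg, Set.indicator_of_notMem]
      intro hc
      exact hx (by rwa [hB, mem_closedBall_zero_iff])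
  have h2 : ∫ x : EuclideanSpace ℝ (Fin d), g ‖x‖ =
      (Module.finrank ℝ (EuclideanSpace ℝ (Fin d))) •
        ((volume (ball (0:EuclideanSpace ℝ (Fin d)) 1)).toReal •
          ∫ y in Ioi (0:ℝ), y ^ (Module.finrank ℝ (EuclideanSpace ℝ (Fin d)) - 1) • g y) :=
    integral_fun_norm_addHaar volume g
  rw [finrank_euclideanSpace_fin] at h2
  have h3 : ∫ y in Ioi (0:ℝ), y ^ (d - 1) • g y
      = ∫ r in (0:ℝ)..1, f r * r^(d-1) := by
    have he : ∀ y : ℝ, y ^ (d-1) • g y = Set.indicator (Iic 1) (fun r => f r * r^(d-1)) y := by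
      intro y
      by_cases hy : y ∈ Iic (1:ℝ)
      · rw [hg, Set.indicator_of_mem hy, Set.indicator_of_mem hy, smul_eq_mul, mul_comm]
      · rw [hg, Set.indicator_of_notMem hy, Set.indicator_of_notMem hy, smul_zero]
    simp_rw [he]
    rw [setIntegral_indicator measurableSet_Iic, Set.Ioi_inter_Iic,
      intervalIntegral.integral_of_le zero_le_one]
  have hBb : volume B = volume (ball (0:EuclideanSpace ℝ (Fin d)) 1) :=
    Measure.addHaar_closedBall_eq_addHaar_ball volume 0 1
  rw [hcond, integral_smul_measure, h1, h2, h3, ← hBb, nsmul_eq_mul, smul_eq_mul, smul_eq_mul,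
    ENNReal.toReal_inv]
  have hne : (volume B).toReal ≠ 0 :=
    ENNReal.toReal_ne_zero.2 ⟨hvol_pos.ne', hvol_lt.ne⟩
  set I := ∫ r in (0:ℝ)..1, f r * r^(d-1) with hI
  have : (volume B).toReal⁻¹ * ((d:ℝ) * ((volume B).toReal * I))
      = ((volume B).toReal⁻¹ * (volume B).toReal) * ((d:ℝ) * I) := by ring
  rw [this, inv_mul_cancel₀ hne, one_mul]

set_option maxHeartbeats 1000000 in
/-- Lemma: let `n ≥ 4`, `δ ≥ 2`, and let `ũ₁, …, ũ_δ` be i.i.d. uniform points in the unit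
ball `B^{n-2} ⊆ ℝ^{n-2}` (modeled by the product of `δ` copies of the normalized Lebesgue
measure on the closed unit ball). Then the probability that the geometric graph on the
`ũᵢ` with connection radius `1` has a universal vertex (a vertex within distance `1` of all
the others) is at most `δ (n-2) ∫₀¹ (1 - r²/4)^{(n-2)(δ-1)/2} r^{n-3} dr`. -/
theorem stmt_19 (n δ : ℕ) (hn : 4 ≤ n) (hδ : 2 ≤ δ)
    (ν : Measure (EuclideanSpace ℝ (Fin (n - 2)))) [IsProbabilityMeasure ν]
    (hν : ν = ProbabilityTheory.cond volume
      (Metric.closedBall (0 : EuclideanSpace ℝ (Fin (n - 2))) 1)) :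
    (Measure.pi (fun _ : Fin δ => ν)
        {u | ∃ i, ∀ j, j ≠ i → dist (u i) (u j) ≤ 1}).toReal ≤
      (δ : ℝ) * ((n : ℝ) - 2) *
        ∫ r in (0 : ℝ)..1,
          (1 - r ^ 2 / 4) ^ ((((n : ℝ) - 2) * ((δ : ℝ) - 1)) / 2) * r ^ (n - 3) := by
  obtain ⟨m, rfl⟩ : ∃ m, δ = m + 1 := ⟨δ - 1, by omega⟩
  have hd0 : 0 < n - 2 := by omega
  set B := closedBall (0 : EuclideanSpace ℝ (Fin (n-2))) 1 with hB
  have hvol_pos : 0 < volume B := (measure_ball_pos volume 0 one_pos).trans_le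
    (measure_mono ball_subset_closedBall)
  have hvol_lt : volume B < ⊤ := measure_closedBall_lt_top
  set p : ℝ := (((n : ℝ) - 2) * (((m + 1 : ℕ) : ℝ) - 1)) / 2 with hp
  have hcastd : ((n - 2 : ℕ) : ℝ) = (n : ℝ) - 2 := by
    rw [Nat.cast_sub (by omega : 2 ≤ n)]; norm_num
  have hpval : p = (((n - 2 : ℕ) : ℝ) * (m : ℝ)) / 2 := by
    rw [hp, hcastd]; push_cast; ring
  have hp0 : 0 ≤ p := by rw [hpval]; positivity
  set f : ℝ → ℝ := fun r => (1 - r ^ 2 / 4) ^ p with hf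
  -- a.e. support
  have haeB : ∀ᵐ x ∂ν, x ∈ B := by
    rw [ae_iff]
    have hset : {x : EuclideanSpace ℝ (Fin (n-2)) | ¬ x ∈ B} = Bᶜ := rfl
    rw [hset, hν, cond_apply measurableSet_closedBall, ← hB]
    simp
  -- the lintegral bound
  have hlint : ∫⁻ x, (ν (closedBall x 1))^m ∂ν ≤ ∫⁻ x, ENNReal.ofReal (f ‖x‖) ∂ν := by
    apply lintegral_mono_ae
    filter_upwards [haeB] with x hx
    rw [hB, mem_closedBall_zero_iff] at hx
    have hx2 : ‖x‖^2 ≤ 1 := by nlinarith [norm_nonneg x]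
    have ha0 : (0:ℝ) ≤ 1 - ‖x‖^2/4 := by linarith
    calc (ν (closedBall x 1))^m
        ≤ (ENNReal.ofReal ((1 - ‖x‖^2/4) ^ (((n-2:ℕ):ℝ)/2)))^m :=
          pow_le_pow_left' (by { have h := aux19_ball (n-2) hd0 x hx; rw [← hB, ← hν] at h; exact h }) m
      _ = ENNReal.ofReal (((1 - ‖x‖^2/4) ^ (((n-2:ℕ):ℝ)/2))^m) :=
          (ENNReal.ofReal_pow (Real.rpow_nonneg ha0 _) m).symm
      _ = ENNReal.ofReal (f ‖x‖) := by
          congr 1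
          rw [hf]
          simp only
          rw [← Real.rpow_natCast ((1 - ‖x‖^2/4) ^ (((n-2:ℕ):ℝ)/2)) m, ← Real.rpow_mul ha0,
            hpval]
          ring_nf
  -- integrability and nonneg of f ∘ norm
  have hcont : Continuous fun x : EuclideanSpace ℝ (Fin (n-2)) => f ‖x‖ := by
    apply Continuous.rpow_const
    · continuity
    · intro x; exact Or.inr hp0
  have hae_nonneg : 0 ≤ᵐ[ν] fun x : EuclideanSpace ℝ (Fin (n-2)) => f ‖x‖ := by
    filter_upwards [haeB] with x hx
    rw [hB, mem_closedBall_zero_iff] at hx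
    have : (0:ℝ) ≤ 1 - ‖x‖^2/4 := by nlinarith [norm_nonneg x]
    exact Real.rpow_nonneg this p
  have hint : Integrable (fun x : EuclideanSpace ℝ (Fin (n-2)) => f ‖x‖) ν := by
    apply Integrable.mono' (integrable_const (1:ℝ)) hcont.aestronglyMeasurable
    filter_upwards [haeB] with x hx
    rw [hB, mem_closedBall_zero_iff] at hx
    have h0 : (0:ℝ) ≤ 1 - ‖x‖^2/4 := by nlinarith [norm_nonneg x]
    have h1 : (1 - ‖x‖^2/4 : ℝ) ≤ 1 := by nlinarith [norm_nonneg x]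
    rw [Real.norm_eq_abs, abs_of_nonneg (Real.rpow_nonneg h0 p)]
    exact Real.rpow_le_one h0 h1 hp0
  have hofReal : ∫⁻ x, ENNReal.ofReal (f ‖x‖) ∂ν
      = ENNReal.ofReal (∫ x, f ‖x‖ ∂ν) :=
    (ofReal_integral_eq_lintegral_ofReal hint hae_nonneg).symm
  have hrad : ∫ x, f ‖x‖ ∂ν = ((n-2:ℕ):ℝ) * ∫ r in (0:ℝ)..1, f r * r^((n-2)-1) := by
    have h := aux19_rad (n-2) hd0 p
    rw [← hB, ← hν] at h
    exact h
  have hInonneg : 0 ≤ ∫ r in (0:ℝ)..1, f r * r^((n-2)-1) := by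
    apply intervalIntegral.integral_nonneg zero_le_one
    intro r hr
    obtain ⟨hr0, hr1⟩ := hr
    have h0 : (0:ℝ) ≤ 1 - r^2/4 := by nlinarith
    exact mul_nonneg (Real.rpow_nonneg h0 p) (pow_nonneg hr0 _)
  set μ := Measure.pi (fun _ : Fin (m+1) => ν) with hμ
  have hbound : μ {u | ∃ i, ∀ j, j ≠ i → dist (u i) (u j) ≤ 1}
      ≤ ENNReal.ofReal (((m:ℝ)+1) * (((n-2:ℕ):ℝ) * ∫ r in (0:ℝ)..1, f r * r^((n-2)-1))) := by
    calc μ {u | ∃ i, ∀ j, j ≠ i → dist (u i) (u j) ≤ 1}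
        ≤ ∑ i : Fin (m+1), μ {u | ∀ j, j ≠ i → dist (u i) (u j) ≤ 1} := by
          have hs : {u : Fin (m+1) → EuclideanSpace ℝ (Fin (n-2)) |
              ∃ i, ∀ j, j ≠ i → dist (u i) (u j) ≤ 1}
              = ⋃ i, {u | ∀ j, j ≠ i → dist (u i) (u j) ≤ 1} := by
            ext u; simp [mem_iUnion]
          rw [hs]
          exact (measure_iUnion_le _).trans (le_of_eq (by rw [tsum_fintype]))
      _ = ∑ _i : Fin (m+1), ∫⁻ x, (ν (closedBall x 1))^m ∂ν :=
          Finset.sum_congr rfl fun i _ => aux19_fub (n-2) m ν i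
      _ ≤ ∑ _i : Fin (m+1), ∫⁻ x, ENNReal.ofReal (f ‖x‖) ∂ν :=
          Finset.sum_le_sum fun i _ => hlint
      _ = (m+1 : ℕ) * ENNReal.ofReal (∫ x, f ‖x‖ ∂ν) := by
          rw [Finset.sum_const, Finset.card_univ, Fintype.card_fin, hofReal, nsmul_eq_mul]
      _ = ENNReal.ofReal (((m:ℝ)+1) * (((n-2:ℕ):ℝ) * ∫ r in (0:ℝ)..1, f r * r^((n-2)-1))) := by
          rw [hrad, show ((m:ℝ)+1) = ((m+1:ℕ):ℝ) by push_cast; ring,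
            ENNReal.ofReal_mul (by positivity), ENNReal.ofReal_mul (by positivity),
            ENNReal.ofReal_natCast, ENNReal.ofReal_natCast,
            ENNReal.ofReal_mul (by positivity), ENNReal.ofReal_natCast]
  have hrhs_nonneg : 0 ≤ ((m:ℝ)+1) * (((n-2:ℕ):ℝ) * ∫ r in (0:ℝ)..1, f r * r^((n-2)-1)) := by
    apply mul_nonneg (by positivity)
    exact mul_nonneg (by positivity) hInonneg
  have hfinal := ENNReal.toReal_le_of_le_ofReal hrhs_nonneg hbound
  refine hfinal.trans (le_of_eq ?_)
  rw [show n - 3 = (n - 2) - 1 from by omega]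
  rw [hcastd]
  push_cast
  ring
end
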